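/- arXiv:2509.18594 — 6 statements merged into one kernel-verified Lean document; each statement's English description precedes it below -/
import Mathlib

section
/- For every even integer m ≥ 6, the spectral radius of S⁻_{(m+4)/2,2} satisfies ρ(S⁻_{(m+4)/2,2}) > (1 + √(4m − 5))/2. -/
open SimpleGraph Matrix

/-- `H` occurs as a subgraph of `G`: an injective map sending adjacent vertices to
adjacent vertices. -/
def ContainsSub {α β : Type*} (H : SimpleGraph α) (G : SimpleGraph β) : Prop :=
  ∃ f : α → β, Function.Injective f ∧ ∀ ⦃a b⦄, H.Adj a b → G.Adj (f a) (f b)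

/-- The graph `H(4,3)`: a 4-cycle `0-1-2-3-0` and a triangle `0-4-5-0`
sharing the common vertex `0`. -/
def H43 : SimpleGraph (Fin 6) :=
  SimpleGraph.fromEdgeSet {s(0,1), s(1,2), s(2,3), s(3,0), s(0,4), s(4,5), s(5,0)}

/-- `G` is `H(4,3)`-free. -/
def H43Free {β : Type*} (G : SimpleGraph β) : Prop := ¬ ContainsSub H43 G

open Classical in
/-- The real adjacency matrix of a simple graph. -/
noncomputable def adjMat {V : Type*} (G : SimpleGraph V) : Matrix V V ℝ :=
  fun i j => if G.Adj i j then 1 else 0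

/-- The spectral radius of a finite simple graph: the largest eigenvalue of its
adjacency matrix. -/
noncomputable def specRad {V : Type*} [Fintype V] (G : SimpleGraph V) : ℝ :=
  sSup {t : ℝ | ∃ x : V → ℝ, x ≠ 0 ∧ (adjMat G).mulVec x = t • x}

/-- `S_{n,2} = K₂ ∨ (n-2)K₁`: vertices `0` and `1` are adjacent to everything. -/
def Sgraph (n : ℕ) : SimpleGraph (Fin n) where
  Adj i j := i ≠ j ∧ (i.val < 2 ∨ j.val < 2)
  symm := by constructor; rintro i j ⟨h1, h2⟩; exact ⟨h1.symm, h2.symm⟩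
  loopless := by constructor; rintro i ⟨h1, _⟩; exact h1 rfl

/-- `S⁻_{n,2}`: the graph `S_{n,2}` with the edge `{1,2}` (an edge incident to a
vertex of degree two) deleted. -/
def SgraphMinus (n : ℕ) : SimpleGraph (Fin n) where
  Adj i j := i ≠ j ∧ (i.val < 2 ∨ j.val < 2) ∧
    ¬(i.val = 1 ∧ j.val = 2) ∧ ¬(i.val = 2 ∧ j.val = 1)
  symm := by
    constructor
    rintro i j ⟨h1, h2, h3, h4⟩
    exact ⟨h1.symm, h2.symm, fun hc => h4 ⟨hc.2, hc.1⟩, fun hc => h3 ⟨hc.2, hc.1⟩⟩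
  loopless := by constructor; rintro i ⟨h1, _⟩; exact h1 rfl

/-- The graph obtained from `S_{k,2}` (on vertices `0,…,k-1`, with `0,1` dominating)
by joining the maximum degree vertex `0` to `l` new vertices `k,…,k+l-1`. -/
def Fgraph (k l : ℕ) : SimpleGraph (Fin (k + l)) where
  Adj i j := i ≠ j ∧ (i.val = 0 ∨ j.val = 0 ∨
    (i.val < k ∧ j.val < k ∧ (i.val = 1 ∨ j.val = 1)))
  symm := by
    constructor
    rintro i j ⟨h1, h2⟩
    refine ⟨h1.symm, ?_⟩
    rcases h2 with h | h | ⟨ha, hb, hc⟩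
    · exact Or.inr (Or.inl h)
    · exact Or.inl h
    · exact Or.inr (Or.inr ⟨hb, ha, hc.symm⟩)
  loopless := by constructor; rintro i ⟨h1, _⟩; exact h1 rfl

/-- The star `K_{1,t}` with center `0`. -/
def starG (t : ℕ) : SimpleGraph (Fin (t + 1)) where
  Adj i j := i ≠ j ∧ (i.val = 0 ∨ j.val = 0)
  symm := by constructor; rintro i j ⟨h1, h2⟩; exact ⟨h1.symm, h2.symm⟩
  loopless := by constructor; rintro i ⟨h1, _⟩; exact h1 rfl

/-- `e(S)`: the number of edges of `G` with both endpoints in `S`. -/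
noncomputable def eIn {V : Type*} (G : SimpleGraph V) (S : Set V) : ℕ :=
  {e ∈ G.edgeSet | ∀ v ∈ e, v ∈ S}.ncard

/-- `e(S,T)`: the number of edges of `G` with one endpoint in `S` and the other in `T`. -/
noncomputable def eBetween {V : Type*} (G : SimpleGraph V) (S T : Set V) : ℕ :=
  {e ∈ G.edgeSet | ∃ a ∈ S, ∃ b ∈ T, e = s(a, b)}.ncard

/-- `G` attains the maximum spectral radius among all `H(4,3)`-free graphs with `m`
edges and no isolated vertices. -/
def IsExtremal (m : ℕ) {V : Type*} [Fintype V] (G : SimpleGraph V) : Prop :=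
  H43Free G ∧ G.edgeSet.ncard = m ∧ (∀ v : V, ∃ w, G.Adj v w) ∧
    ∀ (n : ℕ) (G' : SimpleGraph (Fin n)), H43Free G' → G'.edgeSet.ncard = m →
      (∀ v, ∃ w, G'.Adj v w) → specRad G' ≤ specRad G

private lemma sum_four (n : ℕ) (hn : 5 ≤ n) (a b c d : ℝ) :
    ∑ i : Fin n, (if (i : ℕ) = 0 then a else if (i : ℕ) = 1 then b
      else if (i : ℕ) = 2 then c else d) = a + b + c + ((n : ℝ) - 3) * d := by
  have h0 : (0 : ℕ) < n := by omega
  have h1 : (1 : ℕ) < n := by omega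
  have h2 : (2 : ℕ) < n := by omega
  have key : ∀ i : Fin n, (if (i : ℕ) = 0 then a else if (i : ℕ) = 1 then b
      else if (i : ℕ) = 2 then c else d)
      = d + ((if i = ⟨0, h0⟩ then a - d else 0) + (if i = ⟨1, h1⟩ then b - d else 0)
        + (if i = ⟨2, h2⟩ then c - d else 0)) := by
    intro i
    simp only [Fin.ext_iff]
    by_cases e0 : (i : ℕ) = 0
    · rw [if_pos e0, if_pos e0, if_neg (by omega), if_neg (by omega)]; ring
    · by_cases e1 : (i : ℕ) = 1
      · rw [if_neg e0, if_pos e1, if_neg e0, if_pos e1, if_neg (by omega)]; ring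
      · by_cases e2 : (i : ℕ) = 2
        · rw [if_neg e0, if_neg e1, if_pos e2, if_neg e0, if_neg e1, if_pos e2]; ring
        · rw [if_neg e0, if_neg e1, if_neg e2, if_neg e0, if_neg e1, if_neg e2]; ring
  rw [Finset.sum_congr rfl fun i _ => key i]
  rw [Finset.sum_add_distrib, Finset.sum_add_distrib, Finset.sum_add_distrib,
    Finset.sum_ite_eq' Finset.univ, Finset.sum_ite_eq' Finset.univ,
    Finset.sum_ite_eq' Finset.univ, Finset.sum_const, Finset.card_univ, Fintype.card_fin]
  simp only [Finset.mem_univ, if_true, nsmul_eq_mul]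
  ring

private lemma adjMat_sgm (n : ℕ) (i j : Fin n) :
    adjMat (SgraphMinus n) i j =
      if ((i : ℕ) ≠ (j : ℕ) ∧ ((i : ℕ) < 2 ∨ (j : ℕ) < 2) ∧
          ¬((i : ℕ) = 1 ∧ (j : ℕ) = 2) ∧ ¬((i : ℕ) = 2 ∧ (j : ℕ) = 1)) then 1 else 0 := by
  have hiff : (SgraphMinus n).Adj i j ↔ ((i : ℕ) ≠ (j : ℕ) ∧ ((i : ℕ) < 2 ∨ (j : ℕ) < 2) ∧
      ¬((i : ℕ) = 1 ∧ (j : ℕ) = 2) ∧ ¬((i : ℕ) = 2 ∧ (j : ℕ) = 1)) := by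
    constructor
    · rintro ⟨h1, h2⟩
      exact ⟨fun h => h1 (Fin.ext h), h2⟩
    · rintro ⟨h1, h2⟩
      exact ⟨fun h => h1 (by rw [h]), h2⟩
  classical
  simp only [adjMat]
  exact if_congr hiff rfl rfl

private lemma mulVec_sgm (n : ℕ) (hn : 5 ≤ n) (x : Fin n → ℝ) (v0 v1 v2 : Fin n)
    (h0 : (v0 : ℕ) = 0) (h1 : (v1 : ℕ) = 1) (h2 : (v2 : ℕ) = 2) (i : Fin n) :
    (adjMat (SgraphMinus n)).mulVec x i =
      if (i : ℕ) = 0 then (∑ j, x j) - x v0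
      else if (i : ℕ) = 1 then (∑ j, x j) - x v1 - x v2
      else if (i : ℕ) = 2 then x v0
      else x v0 + x v1 := by
  have hmv : (adjMat (SgraphMinus n)).mulVec x i
      = ∑ j, adjMat (SgraphMinus n) i j * x j := by
    simp [Matrix.mulVec, dotProduct]
  rw [hmv]
  by_cases e0 : (i : ℕ) = 0
  · rw [if_pos e0]
    have key : ∀ j : Fin n, adjMat (SgraphMinus n) i j * x j
        = x j - (if j = v0 then x j else 0) := by
      intro j
      rw [adjMat_sgm]
      by_cases hj : (j : ℕ) = 0
      · rw [if_neg (by omega), if_pos (Fin.ext (by omega))]; ring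
      · rw [if_pos (by omega), if_neg (fun h => hj (by rw [h, h0]))]; ring
    rw [Finset.sum_congr rfl fun j _ => key j, Finset.sum_sub_distrib,
      Finset.sum_ite_eq' Finset.univ]
    simp
  · by_cases e1 : (i : ℕ) = 1
    · rw [if_neg e0, if_pos e1]
      have key : ∀ j : Fin n, adjMat (SgraphMinus n) i j * x j
          = x j - (if j = v1 then x j else 0) - (if j = v2 then x j else 0) := by
        intro j
        rw [adjMat_sgm]
        by_cases hj1 : (j : ℕ) = 1
        · rw [if_neg (by omega), if_pos (Fin.ext (by omega)),
            if_neg (fun h => by rw [h, h2] at hj1; omega)]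
          ring
        · by_cases hj2 : (j : ℕ) = 2
          · rw [if_neg (by omega), if_neg (fun h => by rw [h, h1] at hj2; omega),
              if_pos (Fin.ext (by omega))]
            ring
          · rw [if_pos (by omega), if_neg (fun h => hj1 (by rw [h, h1])),
              if_neg (fun h => hj2 (by rw [h, h2]))]
            ring
      rw [Finset.sum_congr rfl fun j _ => key j, Finset.sum_sub_distrib,
        Finset.sum_sub_distrib, Finset.sum_ite_eq' Finset.univ, Finset.sum_ite_eq' Finset.univ]
      simp
    · by_cases e2 : (i : ℕ) = 2
      · rw [if_neg e0, if_neg e1, if_pos e2]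
        have key : ∀ j : Fin n, adjMat (SgraphMinus n) i j * x j
            = if j = v0 then x j else 0 := by
          intro j
          rw [adjMat_sgm]
          by_cases hj : (j : ℕ) = 0
          · rw [if_pos (by omega), if_pos (Fin.ext (by omega))]; ring
          · rw [if_neg (by omega), if_neg (fun h => hj (by rw [h, h0]))]; ring
        rw [Finset.sum_congr rfl fun j _ => key j, Finset.sum_ite_eq' Finset.univ]
        simp
      · rw [if_neg e0, if_neg e1, if_neg e2]
        have key : ∀ j : Fin n, adjMat (SgraphMinus n) i j * x j
            = (if j = v0 then x j else 0) + (if j = v1 then x j else 0) := by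
          intro j
          rw [adjMat_sgm]
          by_cases hj0 : (j : ℕ) = 0
          · rw [if_pos (by omega), if_pos (Fin.ext (by omega)),
              if_neg (fun h => by rw [h, h1] at hj0; omega)]
            ring
          · by_cases hj1 : (j : ℕ) = 1
            · rw [if_pos (by omega), if_neg (fun h => by rw [h, h0] at hj1; omega),
                if_pos (Fin.ext (by omega))]
              ring
            · rw [if_neg (by omega), if_neg (fun h => hj0 (by rw [h, h0])),
                if_neg (fun h => hj1 (by rw [h, h1]))]
              ring
        rw [Finset.sum_congr rfl fun j _ => key j, Finset.sum_add_distrib,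
          Finset.sum_ite_eq' Finset.univ, Finset.sum_ite_eq' Finset.univ]
        simp

private lemma rayleigh_lt_specRad {V : Type*} [Fintype V] [DecidableEq V]
    (G : SimpleGraph V) (θ : ℝ) (x : V → ℝ) (hx : x ≠ 0)
    (h : θ * ∑ i, x i * x i < ∑ i, (adjMat G).mulVec x i * x i) :
    θ < specRad G := by
  classical
  set A := adjMat G with hA
  have hAH : A.IsHermitian := by
    ext i j
    simp only [hA, adjMat, Matrix.conjTranspose_apply]
    rw [SimpleGraph.adj_comm]
    simp
  have hT : (Matrix.toEuclideanLin A).IsSymmetric :=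
    Matrix.isHermitian_iff_isSymmetric.mp hAH
  set x' : EuclideanSpace ℝ V := (WithLp.equiv 2 (V → ℝ)).symm x with hx'def
  have hx'0 : x' ≠ 0 := by
    intro hc
    apply hx
    have := congrArg (WithLp.equiv 2 (V → ℝ)) hc
    simpa [hx'def] using this
  haveI : Nontrivial (EuclideanSpace ℝ V) := ⟨x', 0, hx'0⟩
  set T := Matrix.toEuclideanLin A with hTdef
  have heig := hT.hasEigenvalue_iSup_of_finiteDimensional
  set lam : ℝ := ⨆ z : { z : EuclideanSpace ℝ V // z ≠ 0 },
      RCLike.re (inner ℝ (T z) (z : EuclideanSpace ℝ V) : ℝ) / ‖(z : EuclideanSpace ℝ V)‖ ^ 2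
    with hlam
  obtain ⟨v, hv⟩ := heig.exists_hasEigenvector
  have hveq : T v = lam • v := hv.apply_eq_smul
  have hmem : lam ∈ {t : ℝ | ∃ y : V → ℝ, y ≠ 0 ∧ (adjMat G).mulVec y = t • y} := by
    refine ⟨WithLp.equiv 2 (V → ℝ) v, ?_, ?_⟩
    · intro hc
      apply hv.2
      have := congrArg (WithLp.equiv 2 (V → ℝ)).symm hc
      simpa using this
    · have := congrArg (WithLp.equiv 2 (V → ℝ)) hveq
      rw [hTdef] at this
      simpa [Matrix.ofLp_toEuclideanLin_apply, WithLp.ofLp_smul, hA] using this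
  set T' := LinearMap.toContinuousLinearMap T with hT'def
  have hbdd : BddAbove {t : ℝ | ∃ y : V → ℝ, y ≠ 0 ∧ (adjMat G).mulVec y = t • y} := by
    refine ⟨‖T'‖, ?_⟩
    rintro t ⟨y, hy0, hy⟩
    have hw0 : (WithLp.equiv 2 (V → ℝ)).symm y ≠ 0 := by
      intro hc
      apply hy0
      have := congrArg (WithLp.equiv 2 (V → ℝ)) hc
      simpa using this
    have hTw : T' ((WithLp.equiv 2 (V → ℝ)).symm y) = t • (WithLp.equiv 2 (V → ℝ)).symm y := by
      show T ((WithLp.equiv 2 (V → ℝ)).symm y) = _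
      rw [hTdef, WithLp.equiv_symm_apply, Matrix.toEuclideanLin_apply_piLp_toLp, hA, hy,
        WithLp.toLp_smul]
    have h1 := T'.le_opNorm ((WithLp.equiv 2 (V → ℝ)).symm y)
    rw [hTw, norm_smul, Real.norm_eq_abs] at h1
    have hwpos : 0 < ‖(WithLp.equiv 2 (V → ℝ)).symm y‖ := norm_pos_iff.mpr hw0
    have habs : |t| ≤ ‖T'‖ := le_of_mul_le_mul_right (by linarith) hwpos
    exact le_trans (le_abs_self t) habs
  have hbdd2 : BddAbove (Set.range fun z : { z : EuclideanSpace ℝ V // z ≠ 0 } =>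
      RCLike.re (inner ℝ (T z) (z : EuclideanSpace ℝ V) : ℝ) / ‖(z : EuclideanSpace ℝ V)‖ ^ 2) := by
    refine ⟨‖T'‖, ?_⟩
    rintro r ⟨z, rfl⟩
    have h1 : (inner ℝ (T z) (z : EuclideanSpace ℝ V) : ℝ)
        ≤ ‖T'‖ * ‖(z : EuclideanSpace ℝ V)‖ ^ 2 := by
      calc (inner ℝ (T z) (z : EuclideanSpace ℝ V) : ℝ)
          ≤ ‖T (z : EuclideanSpace ℝ V)‖ * ‖(z : EuclideanSpace ℝ V)‖ :=
            real_inner_le_norm _ _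
        _ = ‖T' (z : EuclideanSpace ℝ V)‖ * ‖(z : EuclideanSpace ℝ V)‖ := rfl
        _ ≤ (‖T'‖ * ‖(z : EuclideanSpace ℝ V)‖) * ‖(z : EuclideanSpace ℝ V)‖ :=
            mul_le_mul_of_nonneg_right (T'.le_opNorm _) (norm_nonneg _)
        _ = ‖T'‖ * ‖(z : EuclideanSpace ℝ V)‖ ^ 2 := by ring
    have hz : (0 : ℝ) < ‖(z : EuclideanSpace ℝ V)‖ ^ 2 :=
      pow_pos (norm_pos_iff.mpr z.2) 2
    simp only [RCLike.re_to_real]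
    exact (div_le_iff₀ hz).mpr (by linarith)
  have hlam_ge : RCLike.re (inner ℝ (T x') x' : ℝ) / ‖x'‖ ^ 2 ≤ lam := by
    rw [hlam]
    exact le_ciSup hbdd2 ⟨x', hx'0⟩
  have hb : ‖x'‖ ^ 2 = ∑ i, x i * x i := by
    rw [← real_inner_self_eq_norm_sq]
    rw [hx'def]
    rw [WithLp.equiv_symm_apply, PiLp.inner_apply]
    simp [RCLike.inner_apply, sq]
  have hnum : RCLike.re (inner ℝ (T x') x' : ℝ) = ∑ i, (adjMat G).mulVec x i * x i := by
    rw [hTdef, hx'def, WithLp.equiv_symm_apply, Matrix.toEuclideanLin_apply_piLp_toLp, ← hA]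
    simp [PiLp.inner_apply, RCLike.inner_apply, WithLp.equiv_symm_apply]
    exact Finset.sum_congr rfl fun i _ => mul_comm _ _
  have hden : (0 : ℝ) < ∑ i, x i * x i := by
    rw [← hb]
    exact pow_pos (norm_pos_iff.mpr hx'0) 2
  have hray : θ < RCLike.re (inner ℝ (T x') x' : ℝ) / ‖x'‖ ^ 2 := by
    rw [hnum, hb]
    exact (lt_div_iff₀ hden).mpr (by linarith)
  have hsr : specRad G = sSup {t : ℝ | ∃ y : V → ℝ, y ≠ 0 ∧ (adjMat G).mulVec y = t • y} := rfl
  rw [hsr]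
  exact lt_of_lt_of_le (lt_of_lt_of_le hray hlam_ge) (le_csSup hbdd hmem)


private lemma core_sgm (n : ℕ) (hn : 5 ≤ n) (θ : ℝ) (hθpos : 0 < θ)
    (hrel : θ ^ 2 = θ + 2 * ((n : ℝ) - 3) + 1 / 2) : θ < specRad (SgraphMinus n) := by
  have h0 : (0 : ℕ) < n := by omega
  have h1 : (1 : ℕ) < n := by omega
  have h2 : (2 : ℕ) < n := by omega
  set x : Fin n → ℝ := fun i => if (i : ℕ) = 0 then θ ^ 3 + θ ^ 2
      else if (i : ℕ) = 1 then θ ^ 3 + θ ^ 2 - θ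
      else if (i : ℕ) = 2 then θ ^ 2 + θ else 2 * θ ^ 2 + 2 * θ - 1 with hxdef
  have hx0 : x ⟨0, h0⟩ = θ ^ 3 + θ ^ 2 := by simp [hxdef]
  have hx1 : x ⟨1, h1⟩ = θ ^ 3 + θ ^ 2 - θ := by simp [hxdef]
  have hx2 : x ⟨2, h2⟩ = θ ^ 2 + θ := by simp [hxdef]
  have hx : x ≠ 0 := by
    intro hc
    have hz : x ⟨0, h0⟩ = 0 := by rw [hc]; rfl
    rw [hx0] at hz
    nlinarith [hθpos]
  apply rayleigh_lt_specRad _ θ x hx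
  have hS : ∑ j, x j = (θ ^ 3 + θ ^ 2) + (θ ^ 3 + θ ^ 2 - θ) + (θ ^ 2 + θ)
      + ((n : ℝ) - 3) * (2 * θ ^ 2 + 2 * θ - 1) := by
    rw [hxdef]
    exact sum_four n hn _ _ _ _
  have hN : ∑ i, x i * x i
      = (θ ^ 3 + θ ^ 2) * (θ ^ 3 + θ ^ 2) + (θ ^ 3 + θ ^ 2 - θ) * (θ ^ 3 + θ ^ 2 - θ)
        + (θ ^ 2 + θ) * (θ ^ 2 + θ)
        + ((n : ℝ) - 3) * ((2 * θ ^ 2 + 2 * θ - 1) * (2 * θ ^ 2 + 2 * θ - 1)) := by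
    rw [← sum_four n hn ((θ ^ 3 + θ ^ 2) * (θ ^ 3 + θ ^ 2))
      ((θ ^ 3 + θ ^ 2 - θ) * (θ ^ 3 + θ ^ 2 - θ)) ((θ ^ 2 + θ) * (θ ^ 2 + θ))
      ((2 * θ ^ 2 + 2 * θ - 1) * (2 * θ ^ 2 + 2 * θ - 1))]
    refine Finset.sum_congr rfl fun i _ => ?_
    simp only [hxdef]
    split_ifs <;> ring
  have hQ : ∑ i, (adjMat (SgraphMinus n)).mulVec x i * x i
      = (((θ ^ 3 + θ ^ 2) + (θ ^ 3 + θ ^ 2 - θ) + (θ ^ 2 + θ)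
            + ((n : ℝ) - 3) * (2 * θ ^ 2 + 2 * θ - 1)) - (θ ^ 3 + θ ^ 2)) * (θ ^ 3 + θ ^ 2)
        + ((((θ ^ 3 + θ ^ 2) + (θ ^ 3 + θ ^ 2 - θ) + (θ ^ 2 + θ)
            + ((n : ℝ) - 3) * (2 * θ ^ 2 + 2 * θ - 1)) - (θ ^ 3 + θ ^ 2 - θ) - (θ ^ 2 + θ))
              * (θ ^ 3 + θ ^ 2 - θ))
        + (θ ^ 3 + θ ^ 2) * (θ ^ 2 + θ)
        + ((n : ℝ) - 3) * (((θ ^ 3 + θ ^ 2) + (θ ^ 3 + θ ^ 2 - θ)) * (2 * θ ^ 2 + 2 * θ - 1)) := by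
    rw [← sum_four n hn _ _ _ _]
    refine Finset.sum_congr rfl fun i _ => ?_
    rw [mulVec_sgm n hn x ⟨0, h0⟩ ⟨1, h1⟩ ⟨2, h2⟩ rfl rfl rfl i, hS, hx0, hx1, hx2]
    simp only [hxdef]
    split_ifs <;> ring
  rw [hN, hQ]
  have hs2 : (2 : ℝ) ≤ (n : ℝ) - 3 := by
    have h5 : (5 : ℝ) ≤ (n : ℝ) := by exact_mod_cast hn
    linarith
  nlinarith [hrel, hθpos, hs2, mul_pos (show (0:ℝ) < (n:ℝ) - 3 by linarith) hθpos,
    sq_nonneg θ]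

/-- For every even `m ≥ 6`, `ρ(S⁻_{(m+4)/2,2}) > (1 + √(4m−5))/2`. -/
theorem stmt3 (m : ℕ) (hm : 6 ≤ m) (hme : Even m) :
    (1 + Real.sqrt (4 * (m : ℝ) - 5)) / 2 < specRad (SgraphMinus ((m + 4) / 2)) := by
  have hm6 : (6 : ℝ) ≤ (m : ℝ) := by exact_mod_cast hm
  have h4m : (0 : ℝ) ≤ 4 * (m : ℝ) - 5 := by linarith
  obtain ⟨k, hk⟩ := hme
  have hn5 : 5 ≤ (m + 4) / 2 := by omega
  have hnm : (((m + 4) / 2 : ℕ) : ℝ) = ((m : ℝ) + 4) / 2 := by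
    subst hk
    have hdiv : (k + k + 4) / 2 = k + 2 := by omega
    rw [hdiv]
    push_cast
    ring
  have hsq : Real.sqrt (4 * (m : ℝ) - 5) ^ 2 = 4 * (m : ℝ) - 5 := Real.sq_sqrt h4m
  refine core_sgm _ hn5 _ ?_ ?_
  · have := Real.sqrt_nonneg (4 * (m : ℝ) - 5)
    linarith
  · rw [hnm]
    have hs := Real.sqrt_nonneg (4 * (m : ℝ) - 5)
    linear_combination hsq / 4
end

section
/- Let m be an even integer and l an odd integer with l ≥ 3 and m > l + 1. Then ρ(F′_{m,l}) < ρ(F′_{m,1}). -/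
open SimpleGraph Matrix

section Aux

/-- Collatz–Wielandt upper bound: if `A` is symmetric nonnegative and `A z ≤ c z`
for a positive vector `z`, then every eigenvalue is at most `c`. -/
lemma eig_le_of_collatz {n : ℕ} (A : Matrix (Fin n) (Fin n) ℝ)
    (hsym : ∀ i j, A i j = A j i) (hnn : ∀ i j, 0 ≤ A i j)
    (z : Fin n → ℝ) (hz : ∀ i, 0 < z i) (c : ℝ)
    (hAz : ∀ i, (A *ᵥ z) i ≤ c * z i) :
    ∀ t ∈ {t : ℝ | ∃ x : Fin n → ℝ, x ≠ 0 ∧ A.mulVec x = t • x}, t ≤ c := by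
  rintro t ⟨x, hx0, hx⟩
  set S : ℝ := ∑ i, z i * |x i| with hS
  have hSpos : 0 < S := by
    obtain ⟨i, hi⟩ := Function.ne_iff.mp hx0
    have : ∀ j ∈ Finset.univ, 0 ≤ z j * |x j| := fun j _ =>
      mul_nonneg (hz j).le (abs_nonneg _)
    refine Finset.sum_pos' this ⟨i, Finset.mem_univ i, ?_⟩
    exact mul_pos (hz i) (abs_pos.mpr hi)
  have key : |t| * S ≤ c * S := by
    have h1 : ∀ i, |t| * |x i| ≤ ∑ j, A i j * |x j| := by
      intro i
      have : t * x i = ∑ j, A i j * x j := by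
        have := congrFun hx i
        simpa [Matrix.mulVec, dotProduct, Pi.smul_apply, smul_eq_mul,
          mul_comm] using this.symm
      calc |t| * |x i| = |∑ j, A i j * x j| := by rw [← abs_mul, this]
        _ ≤ ∑ j, |A i j * x j| := Finset.abs_sum_le_sum_abs _ _
        _ = ∑ j, A i j * |x j| := by
            refine Finset.sum_congr rfl fun j _ => ?_
            rw [abs_mul, abs_of_nonneg (hnn i j)]
    calc |t| * S = ∑ i, z i * (|t| * |x i|) := by
          rw [hS, Finset.mul_sum]; exact Finset.sum_congr rfl fun i _ => by ring
      _ ≤ ∑ i, z i * ∑ j, A i j * |x j| := by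
          refine Finset.sum_le_sum fun i _ => mul_le_mul_of_nonneg_left (h1 i) (hz i).le
      _ = ∑ j, (∑ i, A i j * z i) * |x j| := by
          have : ∀ i : Fin n, z i * ∑ j, A i j * |x j| = ∑ j, z i * (A i j * |x j|) := fun i =>
            Finset.mul_sum _ _ _
          simp only [this]
          rw [Finset.sum_comm]
          refine Finset.sum_congr rfl fun j _ => ?_
          rw [Finset.sum_mul]
          exact Finset.sum_congr rfl fun i _ => by ring
      _ = ∑ j, (A *ᵥ z) j * |x j| := by
          refine Finset.sum_congr rfl fun j _ => ?_
          congr 1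
          simp only [Matrix.mulVec, dotProduct]
          exact Finset.sum_congr rfl fun i _ => by rw [hsym i j]
      _ ≤ ∑ j, (c * z j) * |x j| := by
          refine Finset.sum_le_sum fun j _ => mul_le_mul_of_nonneg_right (hAz j) (abs_nonneg _)
      _ = c * S := by rw [hS, Finset.mul_sum]; exact Finset.sum_congr rfl fun j _ => by ring
  have : |t| ≤ c := le_of_mul_le_mul_right key hSpos
  exact (le_abs_self t).trans this


private lemma dot_mulVec_star {n : ℕ} (M : Matrix (Fin n) (Fin n) ℝ) (u v : Fin n → ℝ) :
    u ⬝ᵥ (M *ᵥ v) = ((star M) *ᵥ u) ⬝ᵥ v := by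
  simp only [dotProduct, Matrix.mulVec, dotProduct, Finset.mul_sum,
    Finset.sum_mul, Matrix.star_apply, star_trivial]
  rw [Finset.sum_comm]
  exact Finset.sum_congr rfl fun j _ => Finset.sum_congr rfl fun i _ => by ring

lemma rayleigh_lt_sSup {n : ℕ} (A : Matrix (Fin n) (Fin n) ℝ) (hA : A.IsHermitian)
    (hbdd : BddAbove {t : ℝ | ∃ x : Fin n → ℝ, x ≠ 0 ∧ A.mulVec x = t • x})
    (y : Fin n → ℝ) (c : ℝ) (hy : c * (y ⬝ᵥ y) < y ⬝ᵥ (A *ᵥ y)) :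
    c < sSup {t : ℝ | ∃ x : Fin n → ℝ, x ≠ 0 ∧ A.mulVec x = t • x} := by
  rcases Nat.eq_zero_or_pos n with hn | hn
  · subst hn
    simp [dotProduct] at hy
  haveI : NeZero n := ⟨hn.ne'⟩
  obtain ⟨i0, -, hi0⟩ := Finset.exists_max_image Finset.univ hA.eigenvalues
    ⟨0, Finset.mem_univ 0⟩
  set μ := hA.eigenvalues i0 with hμ
  have hmem : μ ∈ {t : ℝ | ∃ x : Fin n → ℝ, x ≠ 0 ∧ A.mulVec x = t • x} := by
    refine ⟨⇑(hA.eigenvectorBasis i0), ?_, hA.mulVec_eigenvectorBasis i0⟩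
    intro h
    apply hA.eigenvectorBasis.orthonormal.ne_zero i0
    ext j
    exact congrFun h j
  set U : Matrix (Fin n) (Fin n) ℝ := (hA.eigenvectorUnitary : Matrix (Fin n) (Fin n) ℝ) with hU
  set w : Fin n → ℝ := (star U) *ᵥ y with hw
  have hUU : U * star U = 1 := (Matrix.mem_unitaryGroup_iff).mp hA.eigenvectorUnitary.2
  have hyy : y ⬝ᵥ y = w ⬝ᵥ w := by
    have h1 : y ⬝ᵥ (U *ᵥ w) = w ⬝ᵥ w := by rw [dot_mulVec_star, ← hw]
    have h2 : y ⬝ᵥ (U *ᵥ w) = y ⬝ᵥ y := by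
      rw [hw, Matrix.mulVec_mulVec, hUU, Matrix.one_mulVec]
    rw [← h1, h2]
  have hyAy : y ⬝ᵥ (A *ᵥ y) = ∑ i, hA.eigenvalues i * (w i * w i) := by
    have hspec := congrArg (fun M : Matrix (Fin n) (Fin n) ℝ => y ⬝ᵥ (M *ᵥ y))
      hA.spectral_theorem
    rw [hspec, Unitary.conjStarAlgAut_apply, Matrix.mul_assoc, ← Matrix.mulVec_mulVec, ← Matrix.mulVec_mulVec,
      dot_mulVec_star, ← hw, RCLike.ofReal_real_eq_id]
    simp only [Function.comp_def, id_eq, dotProduct, Matrix.mulVec_diagonal]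
    exact Finset.sum_congr rfl fun i _ => by ring
  have hray : y ⬝ᵥ (A *ᵥ y) ≤ μ * (y ⬝ᵥ y) := by
    rw [hyAy, hyy]
    have : μ * (w ⬝ᵥ w) = ∑ i, μ * (w i * w i) := by
      rw [dotProduct, Finset.mul_sum]
    rw [this]
    exact Finset.sum_le_sum fun i _ =>
      mul_le_mul_of_nonneg_right (hi0 i (Finset.mem_univ i)) (mul_self_nonneg _)
  have hq : 0 ≤ y ⬝ᵥ y := Finset.sum_nonneg fun i _ => mul_self_nonneg _
  have hqpos : 0 < y ⬝ᵥ y := by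
    rcases lt_or_eq_of_le hq with h | h
    · exact h
    · exfalso
      rw [← h, mul_zero] at hray hy
      linarith
  have hcμ : c < μ := lt_of_mul_lt_mul_right (hy.trans_le hray) hq
  exact hcμ.trans_le (le_csSup hbdd hmem)

/-- Sum over `Fin (k+l)` of a function constant on the four vertex classes. -/
lemma sum_classes (k l : ℕ) (hk : 2 ≤ k) (g : Fin (k + l) → ℝ) (e0 e1 ew ep : ℝ)
    (h0 : ∀ j : Fin (k + l), j.val = 0 → g j = e0)
    (h1 : ∀ j : Fin (k + l), j.val = 1 → g j = e1)
    (hw : ∀ j : Fin (k + l), 2 ≤ j.val → j.val < k → g j = ew)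
    (hp : ∀ j : Fin (k + l), k ≤ j.val → g j = ep) :
    ∑ j, g j = e0 + e1 + ((k : ℝ) - 2) * ew + (l : ℝ) * ep := by
  classical
  have key : ∀ j : Fin (k + l), g j =
      (fun v : ℕ => if v = 0 then e0 else if v = 1 then e1 else if v < k then ew else ep) j.val := by
    intro j
    by_cases hj0 : j.val = 0
    · simp [hj0, h0 j hj0]
    · by_cases hj1 : j.val = 1
      · simp [hj1, hj1 ▸ hj0, h1 j hj1]
      · by_cases hjw : j.val < k
        · simp [hj0, hj1, hjw, hw j (by omega) hjw]
        · simp [hj0, hj1, hjw, hp j (by omega)]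
  have hconv := Fin.sum_univ_eq_sum_range
    (fun v : ℕ => if v = 0 then e0 else if v = 1 then e1 else if v < k then ew else ep) (k + l)
  rw [Finset.sum_congr rfl fun j _ => key j, hconv]
  have e2k : (2 : ℕ) ≤ k := hk
  have hkk : k ≤ k + l := Nat.le_add_right _ _
  rw [Finset.range_eq_Ico, ← Finset.sum_Ico_consecutive _ (Nat.zero_le k) hkk,
    ← Finset.sum_Ico_consecutive _ (Nat.zero_le 2) e2k]
  have s1 : ∑ v ∈ Finset.Ico 0 2,
      (if v = 0 then e0 else if v = 1 then e1 else if v < k then ew else ep) = e0 + e1 := by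
    rw [← Finset.range_eq_Ico]
    simp [Finset.sum_range_succ]
  have s2 : ∑ v ∈ Finset.Ico 2 k,
      (if v = 0 then e0 else if v = 1 then e1 else if v < k then ew else ep)
      = ((k : ℝ) - 2) * ew := by
    have hcongr : ∀ v ∈ Finset.Ico 2 k,
        (if v = 0 then e0 else if v = 1 then e1 else if v < k then ew else ep) = ew := by
      intro v hv
      rw [Finset.mem_Ico] at hv
      rw [if_neg (by omega), if_neg (by omega), if_pos hv.2]
    rw [Finset.sum_congr rfl hcongr, Finset.sum_const, Nat.card_Ico, nsmul_eq_mul,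
      Nat.cast_sub hk]
    norm_num
  have s3 : ∑ v ∈ Finset.Ico k (k + l),
      (if v = 0 then e0 else if v = 1 then e1 else if v < k then ew else ep)
      = (l : ℝ) * ep := by
    have hcongr : ∀ v ∈ Finset.Ico k (k + l),
        (if v = 0 then e0 else if v = 1 then e1 else if v < k then ew else ep) = ep := by
      intro v hv
      rw [Finset.mem_Ico] at hv
      rw [if_neg (by omega), if_neg (by omega), if_neg (by omega)]
    rw [Finset.sum_congr rfl hcongr, Finset.sum_const, Nat.card_Ico,
      Nat.add_sub_cancel_left, nsmul_eq_mul]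
  rw [s1, s2, s3]

/-- The rows of `adjMat (Fgraph k l)` applied to a class-constant vector. -/
lemma fgraph_mulVec (k l : ℕ) (hk : 3 ≤ k) (c0 c1 cw cp : ℝ) (z : Fin (k + l) → ℝ)
    (hz0 : ∀ j : Fin (k + l), j.val = 0 → z j = c0)
    (hz1 : ∀ j : Fin (k + l), j.val = 1 → z j = c1)
    (hzw : ∀ j : Fin (k + l), 2 ≤ j.val → j.val < k → z j = cw)
    (hzp : ∀ j : Fin (k + l), k ≤ j.val → z j = cp)
    (i : Fin (k + l)) :
    (adjMat (Fgraph k l) *ᵥ z) i =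
      if i.val = 0 then c1 + ((k : ℝ) - 2) * cw + (l : ℝ) * cp
      else if i.val = 1 then c0 + ((k : ℝ) - 2) * cw
      else if i.val < k then c0 + c1
      else c0 := by
  classical
  have hmv : (adjMat (Fgraph k l) *ᵥ z) i = ∑ j, (if (Fgraph k l).Adj i j then z j else 0) := by
    simp only [Matrix.mulVec, dotProduct, adjMat]
    exact Finset.sum_congr rfl fun j _ => by split_ifs <;> simp
  have hadj : ∀ j : Fin (k + l), (Fgraph k l).Adj i j ↔
      (i.val ≠ j.val ∧ (i.val = 0 ∨ j.val = 0 ∨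
        (i.val < k ∧ j.val < k ∧ (i.val = 1 ∨ j.val = 1)))) := by
    intro j
    constructor
    · rintro ⟨hne, h⟩
      exact ⟨fun hv => hne (Fin.ext hv), h⟩
    · rintro ⟨hne, h⟩
      exact ⟨fun hv => hne (congrArg Fin.val hv), h⟩
  rw [hmv]
  by_cases hi0 : i.val = 0
  · rw [if_pos hi0]
    refine sum_classes k l (by omega) _ 0 c1 cw cp ?_ ?_ ?_ ?_ |>.trans (by ring)
    · intro j hj; rw [if_neg]; rw [hadj]; omega
    · intro j hj
      rw [if_pos, hz1 j hj]
      rw [hadj]; omega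
    · intro j hj2 hjk
      rw [if_pos, hzw j hj2 hjk]
      rw [hadj]; omega
    · intro j hj
      rw [if_pos, hzp j hj]
      rw [hadj]; omega
  · by_cases hi1 : i.val = 1
    · rw [if_neg hi0, if_pos hi1]
      refine sum_classes k l (by omega) _ c0 0 cw 0 ?_ ?_ ?_ ?_ |>.trans (by ring)
      · intro j hj; rw [if_pos, hz0 j hj]; rw [hadj]; omega
      · intro j hj; rw [if_neg]; rw [hadj]; omega
      · intro j hj2 hjk; rw [if_pos, hzw j hj2 hjk]; rw [hadj]; omega
      · intro j hj; rw [if_neg]; rw [hadj]; omega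
    · by_cases hiw : i.val < k
      · rw [if_neg hi0, if_neg hi1, if_pos hiw]
        refine sum_classes k l (by omega) _ c0 c1 0 0 ?_ ?_ ?_ ?_ |>.trans (by ring)
        · intro j hj; rw [if_pos, hz0 j hj]; rw [hadj]; omega
        · intro j hj; rw [if_pos, hz1 j hj]; rw [hadj]; omega
        · intro j hj2 hjk; rw [if_neg]; rw [hadj]; omega
        · intro j hj; rw [if_neg]; rw [hadj]; omega
      · rw [if_neg hi0, if_neg hi1, if_neg hiw]
        refine sum_classes k l (by omega) _ c0 0 0 0 ?_ ?_ ?_ ?_ |>.trans (by ring)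
        · intro j hj; rw [if_pos, hz0 j hj]; rw [hadj]; omega
        · intro j hj; rw [if_neg]; rw [hadj]; omega
        · intro j hj2 hjk; rw [if_neg]; rw [hadj]; omega
        · intro j hj; rw [if_neg]; rw [hadj]; omega

lemma adjMat_symm_entries {V : Type*} (G : SimpleGraph V) :
    ∀ i j, adjMat G i j = adjMat G j i := by
  classical
  intro i j
  by_cases h : G.Adj i j
  · rw [adjMat, if_pos h, adjMat, if_pos (h.symm)]
  · rw [adjMat, if_neg h, adjMat, if_neg (fun hc => h hc.symm)]

lemma adjMat_nonneg {V : Type*} (G : SimpleGraph V) : ∀ i j, 0 ≤ adjMat G i j := by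
  intro i j
  rw [adjMat]
  split_ifs <;> norm_num

lemma adjMat_le_one {V : Type*} (G : SimpleGraph V) : ∀ i j, adjMat G i j ≤ 1 := by
  intro i j
  rw [adjMat]
  split_ifs <;> norm_num

lemma adjMat_isHermitian {n : ℕ} (G : SimpleGraph (Fin n)) : (adjMat G).IsHermitian := by
  ext i j
  rw [Matrix.conjTranspose_apply, star_trivial]
  exact adjMat_symm_entries G j i

lemma spec_set_bddAbove {n : ℕ} (G : SimpleGraph (Fin n)) :
    BddAbove {t : ℝ | ∃ x : Fin n → ℝ, x ≠ 0 ∧ (adjMat G).mulVec x = t • x} := by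
  refine ⟨(n : ℝ), fun u hu => ?_⟩
  refine eig_le_of_collatz (adjMat G) (adjMat_symm_entries G) (adjMat_nonneg G)
    (fun _ => 1) (fun _ => one_pos) (n : ℝ) (fun i => ?_) u hu
  have : (adjMat G *ᵥ fun _ => 1) i = ∑ j, adjMat G i j := by
    simp [Matrix.mulVec, dotProduct]
  rw [this, mul_one]
  calc ∑ j, adjMat G i j ≤ ∑ _j : Fin n, (1 : ℝ) :=
        Finset.sum_le_sum fun j _ => adjMat_le_one G i j
    _ = n := by simp

end Aux

section Key

lemma exists_root (aR dR : ℝ) (haR1 : 1 ≤ aR) (hdR1 : 1 ≤ dR) :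
    ∃ t : ℝ, 2 ≤ t ∧ aR + (2 * dR + 1) < t ^ 2 ∧
      (t ^ 2 - aR) * (t ^ 2 - aR - (2 * dR + 1)) - (t + aR) ^ 2 = 0 := by
  set L : ℝ := 2 * dR + 1 with hL
  set g : ℝ → ℝ := fun x => (x ^ 2 - aR) * (x ^ 2 - aR - L) - (x + aR) ^ 2 with hg
  have hcont : Continuous g := by fun_prop
  set b : ℝ := Real.sqrt (aR + L) with hb
  set B : ℝ := aR + L + 2 with hB
  have haL : (0 : ℝ) ≤ aR + L := by nlinarith
  have hbsq : b ^ 2 = aR + L := Real.sq_sqrt haL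
  have hbnn : 0 ≤ b := Real.sqrt_nonneg _
  have hgb : g b < 0 := by
    have : g b = -(b + aR) ^ 2 := by rw [hg]; simp only []; rw [hbsq]; ring
    rw [this]
    nlinarith
  have hB6 : 6 ≤ B := by nlinarith
  have hgB : 0 < g B := by
    have h1 : B ^ 2 - aR - L = B ^ 2 - B + 2 := by rw [hB]; ring
    have h2 : B ^ 2 - aR = B ^ 2 - B + 2 + L := by rw [hB]; ring
    have h3 : 0 < B ^ 2 - B + 2 := by nlinarith
    have h4 : B + aR ≤ 2 * B := by nlinarith
    have h5 : 2 * B ≤ B ^ 2 - B + 2 := by nlinarith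
    rw [hg]; simp only []
    nlinarith
  have hbB : b ≤ B := by
    have : b ≤ Real.sqrt (B ^ 2) := Real.sqrt_le_sqrt (by nlinarith)
    rwa [Real.sqrt_sq (by nlinarith : (0:ℝ) ≤ B)] at this
  obtain ⟨t, htmem, hgt⟩ := intermediate_value_Ioo hbB hcont.continuousOn ⟨hgb, hgB⟩
  have hbt : b < t := htmem.1
  have ht2 : aR + L < t ^ 2 := by
    rw [← hbsq]
    have : b * b < t * t := mul_self_lt_mul_self hbnn hbt
    nlinarith
  have htpos : 0 < t := lt_of_le_of_lt hbnn hbt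
  have ht1 : 2 ≤ t := by nlinarith
  exact ⟨t, ht1, ht2, hgt⟩

set_option maxHeartbeats 1000000 in
lemma key_ineq (a d : ℕ) (ha : 1 ≤ a) (hd : 1 ≤ d) :
    specRad (Fgraph (a + 2) (2 * d + 1)) < specRad (Fgraph (a + d + 2) 1) := by
  have haR1 : (1 : ℝ) ≤ (a : ℝ) := Nat.one_le_cast.mpr ha
  have hdR1 : (1 : ℝ) ≤ (d : ℝ) := Nat.one_le_cast.mpr hd
  set aR : ℝ := (a : ℝ) with haR
  set dR : ℝ := (d : ℝ) with hdR
  set L : ℝ := 2 * dR + 1 with hL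
  obtain ⟨t, ht1, ht2, hP⟩ := exists_root aR dR haR1 hdR1
  rw [← hL] at ht2 hP
  have htpos : 0 < t := by linarith
  have htaR : aR < t ^ 2 := by nlinarith
  have htA' : aR + dR < t ^ 2 := by nlinarith
  -- upper bound : specRad (Fgraph (a+2) (2d+1)) ≤ t
  have hupper : specRad (Fgraph (a + 2) (2 * d + 1)) ≤ t := by
    rw [specRad]
    refine Real.sSup_le ?_ (by linarith)
    set z : Fin ((a + 2) + (2 * d + 1)) → ℝ := fun j =>
      if j.val = 0 then t * (t ^ 2 - aR) else if j.val = 1 then t * (t + aR)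
      else if j.val < a + 2 then t ^ 2 + t else t ^ 2 - aR with hzdef
    have hz0 : ∀ j : Fin ((a + 2) + (2 * d + 1)), j.val = 0 → z j = t * (t ^ 2 - aR) := by
      intro j hj; rw [hzdef]; simp only []; rw [if_pos hj]
    have hz1 : ∀ j : Fin ((a + 2) + (2 * d + 1)), j.val = 1 → z j = t * (t + aR) := by
      intro j hj; rw [hzdef]; simp only []; rw [if_neg (by omega), if_pos hj]
    have hzw : ∀ j : Fin ((a + 2) + (2 * d + 1)), 2 ≤ j.val → j.val < a + 2 →
        z j = t ^ 2 + t := by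
      intro j hj2 hjk; rw [hzdef]; simp only []
      rw [if_neg (by omega), if_neg (by omega), if_pos hjk]
    have hzp : ∀ j : Fin ((a + 2) + (2 * d + 1)), a + 2 ≤ j.val → z j = t ^ 2 - aR := by
      intro j hj; rw [hzdef]; simp only []
      rw [if_neg (by omega), if_neg (by omega), if_neg (by omega)]
    refine eig_le_of_collatz _ (adjMat_symm_entries _) (adjMat_nonneg _) z ?_ t ?_
    · intro i
      rw [hzdef]; simp only []
      split_ifs
      · nlinarith
      · nlinarith
      · nlinarith
      · nlinarith
    · intro i
      rw [fgraph_mulVec (a + 2) (2 * d + 1) (by omega) _ _ _ _ z hz0 hz1 hzw hzp i]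
      have hcast1 : ((a + 2 : ℕ) : ℝ) - 2 = aR := by push_cast [haR]; ring
      have hcast2 : ((2 * d + 1 : ℕ) : ℝ) = L := by push_cast [hL, hdR]; ring
      rw [hcast1, hcast2]
      by_cases hi0 : i.val = 0
      · rw [if_pos hi0, hz0 i hi0]
        have : t * (t + aR) + aR * (t ^ 2 + t) + L * (t ^ 2 - aR)
            = t * (t * (t ^ 2 - aR)) := by linear_combination -hP
        linarith [this.le]
      · rw [if_neg hi0]
        by_cases hi1 : i.val = 1
        · rw [if_pos hi1, hz1 i hi1]
          have : t * (t ^ 2 - aR) + aR * (t ^ 2 + t) = t * (t * (t + aR)) := by ring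
          linarith [this.le]
        · rw [if_neg hi1]
          by_cases hiw : i.val < a + 2
          · rw [if_pos hiw, hzw i (by omega) hiw]
            have : t * (t ^ 2 - aR) + t * (t + aR) = t * (t ^ 2 + t) := by ring
            linarith [this.le]
          · rw [if_neg hiw, hzp i (by omega)]
  -- lower bound : t < specRad (Fgraph (a+d+2) 1)
  have hlower : t < specRad (Fgraph (a + d + 2) 1) := by
    rw [specRad]
    set A' : ℝ := aR + dR with hA'
    set y : Fin ((a + d + 2) + 1) → ℝ := fun j =>
      if j.val = 0 then t * (t ^ 2 - A') else if j.val = 1 then t * (t + A')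
      else if j.val < a + d + 2 then t ^ 2 + t else t ^ 2 - A' with hydef
    have hy0 : ∀ j : Fin ((a + d + 2) + 1), j.val = 0 → y j = t * (t ^ 2 - A') := by
      intro j hj; rw [hydef]; simp only []; rw [if_pos hj]
    have hy1 : ∀ j : Fin ((a + d + 2) + 1), j.val = 1 → y j = t * (t + A') := by
      intro j hj; rw [hydef]; simp only []; rw [if_neg (by omega), if_pos hj]
    have hyw : ∀ j : Fin ((a + d + 2) + 1), 2 ≤ j.val → j.val < a + d + 2 →
        y j = t ^ 2 + t := by
      intro j hj2 hjk; rw [hydef]; simp only []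
      rw [if_neg (by omega), if_neg (by omega), if_pos hjk]
    have hyp : ∀ j : Fin ((a + d + 2) + 1), a + d + 2 ≤ j.val → y j = t ^ 2 - A' := by
      intro j hj; rw [hydef]; simp only []
      rw [if_neg (by omega), if_neg (by omega), if_neg (by omega)]
    refine rayleigh_lt_sSup _ (adjMat_isHermitian _) (spec_set_bddAbove _) y t ?_
    have hcast1 : ((a + d + 2 : ℕ) : ℝ) - 2 = A' := by push_cast [hA', haR, hdR]; ring
    have hcast2 : ((1 : ℕ) : ℝ) = 1 := by norm_num
    set c0 : ℝ := t * (t ^ 2 - A')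
    set c1 : ℝ := t * (t + A')
    set cw : ℝ := t ^ 2 + t
    set cp : ℝ := t ^ 2 - A'
    set r0 : ℝ := c1 + A' * cw + 1 * cp with hr0
    set r1 : ℝ := c0 + A' * cw with hr1
    set rw' : ℝ := c0 + c1 with hrw
    set rp : ℝ := c0 with hrp
    have hmv : ∀ i : Fin ((a + d + 2) + 1), (adjMat (Fgraph (a + d + 2) 1) *ᵥ y) i =
        if i.val = 0 then r0 else if i.val = 1 then r1
        else if i.val < a + d + 2 then rw' else rp := by
      intro i
      rw [fgraph_mulVec (a + d + 2) 1 (by omega) _ _ _ _ y hy0 hy1 hyw hyp i,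
        hcast1, hcast2]
    have hnum : y ⬝ᵥ (adjMat (Fgraph (a + d + 2) 1) *ᵥ y)
        = c0 * r0 + c1 * r1 + A' * (cw * rw') + 1 * (cp * rp) := by
      have := sum_classes (a + d + 2) 1 (by omega)
        (fun i => y i * (adjMat (Fgraph (a + d + 2) 1) *ᵥ y) i)
        (c0 * r0) (c1 * r1) (cw * rw') (cp * rp) ?_ ?_ ?_ ?_
      · rw [dotProduct]
        rw [this, hcast1, hcast2]
      · intro j hj; rw [hy0 j hj, hmv j, if_pos hj]
      · intro j hj; rw [hy1 j hj, hmv j, if_neg (by omega), if_pos hj]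
      · intro j hj2 hjk
        rw [hyw j hj2 hjk, hmv j, if_neg (by omega), if_neg (by omega), if_pos hjk]
      · intro j hj
        rw [hyp j hj, hmv j, if_neg (by omega), if_neg (by omega), if_neg (by omega)]
    have hden : y ⬝ᵥ y = c0 * c0 + c1 * c1 + A' * (cw * cw) + 1 * (cp * cp) := by
      have := sum_classes (a + d + 2) 1 (by omega)
        (fun i => y i * y i) (c0 * c0) (c1 * c1) (cw * cw) (cp * cp) ?_ ?_ ?_ ?_
      · rw [dotProduct]
        rw [this, hcast1, hcast2]
      · intro j hj; rw [hy0 j hj]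
      · intro j hj; rw [hy1 j hj]
      · intro j hj2 hjk; rw [hyw j hj2 hjk]
      · intro j hj; rw [hyp j hj]
    rw [hnum, hden]
    have hkey : c0 * r0 + c1 * r1 + A' * (cw * rw') + 1 * (cp * rp)
        - t * (c0 * c0 + c1 * c1 + A' * (cw * cw) + 1 * (cp * cp))
        = t * (t ^ 2 - A') * (dR * (2 * t + 2 * aR - 1)) := by
      simp only [hr0, hr1, hrw, hrp, c0, c1, cw, cp, hA', hL] at *
      linear_combination (-t * (t ^ 2 - (aR + dR))) * hP
    have hpos : 0 < t * (t ^ 2 - A') * (dR * (2 * t + 2 * aR - 1)) := by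
      have h1 : 0 < t ^ 2 - A' := by linarith
      have h2 : 0 < 2 * t + 2 * aR - 1 := by nlinarith
      have h3 : 0 < dR := by linarith
      positivity
    linarith
  exact lt_of_le_of_lt hupper hlower

end Key

/-- Fang–You. If `m` is even, `l` is odd, `l ≥ 3` and `m > l + 1`,
then `ρ(F'_{m,l}) < ρ(F'_{m,1})`. -/
theorem stmt5 (m l : ℕ) (hme : Even m) (hlo : Odd l) (hl : 3 ≤ l) (hml : l + 1 < m) :
    specRad (Fgraph ((m - l + 3) / 2) l) < specRad (Fgraph ((m - 1 + 3) / 2) 1) := by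
  obtain ⟨dd, hdd⟩ := hlo
  obtain ⟨mm, hmm⟩ := hme
  have hdd1 : 1 ≤ dd := by omega
  have ha1 : 1 ≤ mm - dd - 1 := by omega
  have h1 : (m - l + 3) / 2 = (mm - dd - 1) + 2 := by omega
  have h2 : (m - 1 + 3) / 2 = (mm - dd - 1) + dd + 2 := by omega
  have h3 : l = 2 * dd + 1 := by omega
  rw [h1, h2, h3]
  exact key_ineq (mm - dd - 1) dd ha1 hdd1
end

section
/- Let G be a finite simple graph with m edges and spectral radius ρ, let x be a nonnegative nonzero eigenvector of the adjacency matrix of G corresponding to ρ, and let u* be a vertex at which x attains its maximum entry. If the neighborhood N(u*) is an independent set in G, then ρ ≤ √m. -/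
open SimpleGraph Matrix

/-- If `x` is a nonnegative nonzero eigenvector of `A(G)` for `ρ(G)`
with maximum entry at `u`, and `N(u)` is an independent set, then `ρ(G) ≤ √m`. -/
theorem stmt9 {V : Type*} [Fintype V] (m : ℕ) (G : SimpleGraph V)
    (hedges : G.edgeSet.ncard = m)
    (x : V → ℝ) (hxnn : ∀ v, 0 ≤ x v) (hx0 : x ≠ 0)
    (heig : (adjMat G).mulVec x = specRad G • x)
    (u : V) (hmaxx : ∀ v, x v ≤ x u)
    (hind : ∀ a ∈ G.neighborSet u, ∀ b ∈ G.neighborSet u, ¬ G.Adj a b) :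
    specRad G ≤ Real.sqrt m := by
  classical
  set ρ := specRad G with hρ
  have hxu : 0 < x u := by
    rcases lt_or_eq_of_le (hxnn u) with h | h
    · exact h
    · exact absurd (funext fun v => le_antisymm (h ▸ hmaxx v) (hxnn v)) hx0
  have heig' : ∀ v, ∑ w, adjMat G v w * x w = ρ * x v := fun v => by
    have := congrFun heig v
    simpa [Matrix.mulVec, dotProduct] using this
  -- the set of paths u - w - z of length two
  set S : Finset (V × V) :=
    Finset.univ.filter (fun p => G.Adj u p.1 ∧ G.Adj p.1 p.2) with hS
  have hcard : (S.card : ℝ) ≤ (m : ℝ) := by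
    have hinj : Set.InjOn (fun p : V × V => s(p.1, p.2)) S := by
      intro p hp q hq hpq
      simp only [hS, Finset.coe_filter, Set.mem_setOf_eq] at hp hq
      rcases Sym2.eq_iff.mp hpq with ⟨h1, h2⟩ | ⟨h1, h2⟩
      · exact Prod.ext h1 h2
      · exact absurd hq.2.2 (hind q.1 hq.2.1 q.2 (h1 ▸ hp.2.1))
    have hmaps : ∀ p ∈ S, s(p.1, p.2) ∈ G.edgeFinset := by
      intro p hp
      simp only [hS, Finset.mem_filter] at hp
      simpa [SimpleGraph.mem_edgeFinset] using hp.2.2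
    have hle := Finset.card_le_card_of_injOn _ hmaps hinj
    have hm : G.edgeFinset.card = m := by
      rw [← hedges, Set.ncard_eq_toFinset_card']
      congr 1
    exact_mod_cast hm ▸ hle
  have hsum : ∑ w, ∑ z, adjMat G u w * adjMat G w z = (S.card : ℝ) := by
    rw [hS, Finset.card_filter]
    push_cast
    rw [← Finset.sum_product']
    rw [Finset.univ_product_univ]
    apply Finset.sum_congr rfl
    intro p _
    by_cases h1 : G.Adj u p.1 <;> by_cases h2 : G.Adj p.1 p.2 <;> simp [adjMat, h1, h2]
  have hkey : ρ ^ 2 * x u ≤ (m : ℝ) * x u := by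
    have h1 : ρ ^ 2 * x u = ∑ w, ∑ z, adjMat G u w * adjMat G w z * x z := by
      calc ρ ^ 2 * x u = ρ * (ρ * x u) := by ring
        _ = ρ * ∑ w, adjMat G u w * x w := by rw [heig' u]
        _ = ∑ w, adjMat G u w * (ρ * x w) := by
            rw [Finset.mul_sum]; exact Finset.sum_congr rfl fun w _ => by ring
        _ = ∑ w, adjMat G u w * ∑ z, adjMat G w z * x z := by
            exact Finset.sum_congr rfl fun w _ => by rw [heig' w]
        _ = ∑ w, ∑ z, adjMat G u w * adjMat G w z * x z := by
            refine Finset.sum_congr rfl fun w _ => ?_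
            rw [Finset.mul_sum]; exact Finset.sum_congr rfl fun z _ => by ring
    have h2 : ∑ w, ∑ z, adjMat G u w * adjMat G w z * x z ≤
        ∑ w, ∑ z, adjMat G u w * adjMat G w z * x u := by
      apply Finset.sum_le_sum; intro w _
      apply Finset.sum_le_sum; intro z _
      have hnn : (0:ℝ) ≤ adjMat G u w * adjMat G w z := by
        unfold adjMat; positivity
      exact mul_le_mul_of_nonneg_left (hmaxx z) hnn
    calc ρ ^ 2 * x u = _ := h1
      _ ≤ ∑ w, ∑ z, adjMat G u w * adjMat G w z * x u := h2
      _ = (∑ w, ∑ z, adjMat G u w * adjMat G w z) * x u := by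
          rw [Finset.sum_mul]
          exact Finset.sum_congr rfl fun w _ => (Finset.sum_mul _ _ _).symm
      _ = (S.card : ℝ) * x u := by rw [hsum]
      _ ≤ (m : ℝ) * x u := mul_le_mul_of_nonneg_right hcard (le_of_lt hxu)
  have hρ2 : ρ ^ 2 ≤ (m : ℝ) := le_of_mul_le_mul_right (by linarith) hxu
  calc ρ ≤ |ρ| := le_abs_self ρ
    _ = Real.sqrt (ρ ^ 2) := (Real.sqrt_sq_eq_abs ρ).symm
    _ ≤ Real.sqrt m := Real.sqrt_le_sqrt hρ2
end

section
/- Let m ≥ 38 be an even integer, let G be a graph attaining the maximum spectral radius among all H(4,3)-free graphs with m edges and no isolated vertices, let x be a positive eigenvector of the adjacency matrix of G corresponding to ρ(G), and let u* be a vertex at which x attains its maximum entry. Then at least one neighbor of u* has a neighbor inside N(u*); equivalently, the subgraph of G induced by N(u*) contains an edge. -/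
open SimpleGraph Matrix

lemma h43adjs : H43.Adj 0 1 ∧ H43.Adj 1 2 ∧ H43.Adj 2 3 ∧ H43.Adj 3 0 ∧ H43.Adj 0 4 ∧ H43.Adj 4 5 ∧ H43.Adj 5 0 := by
  refine ⟨?_,?_,?_,?_,?_,?_,?_⟩ <;> simp [H43, Sym2.eq_iff]

lemma h43free_aux {β : Type*} (G : SimpleGraph β) (P R : β → Prop)
    (hcov : ∀ x y, G.Adj x y → R x → R y → P x ∨ P y)
    (hgood : ∀ v w w', w ≠ w' → G.Adj v w → G.Adj v w' → R v)
    (h2 : ∀ a b c, P a → P b → P c → a = b ∨ a = c ∨ b = c) : H43Free G := by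
  rintro ⟨f, hinj, hadj⟩
  obtain ⟨a01, a12, a23, a30, a04, a45, a50⟩ := h43adjs
  -- images have two distinct neighbors, hence R
  have hR : ∀ i : Fin 6, R (f i) := by
    intro i
    fin_cases i
    · exact hgood _ _ _ (fun h => by simpa using hinj h) (hadj a01) (hadj a04)
    · exact hgood _ _ _ (fun h => by simpa using hinj h) (hadj a01.symm) (hadj a12)
    · exact hgood _ _ _ (fun h => by simpa using hinj h) (hadj a12.symm) (hadj a23)
    · exact hgood _ _ _ (fun h => by simpa using hinj h) (hadj a23.symm) (hadj a30)
    · exact hgood _ _ _ (fun h => by simpa using hinj h) (hadj a04.symm) (hadj a45)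
    · exact hgood _ _ _ (fun h => by simpa using hinj h) (hadj a45.symm) (hadj a50)
  have cov : ∀ ⦃i j : Fin 6⦄, H43.Adj i j → P (f i) ∨ P (f j) :=
    fun i j h => hcov _ _ (hadj h) (hR i) (hR j)
  have hne : ∀ {i j : Fin 6}, i ≠ j → f i ≠ f j := fun h h' => h (hinj h')
  by_cases h0 : P (f 0)
  · rcases cov a45 with h4 | h5
    · rcases cov a12 with h1 | h2'
      · rcases h2 _ _ _ h0 h4 h1 with h | h | h
        · exact hne (by decide) h
        · exact hne (by decide) h
        · exact hne (by decide) h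
      · rcases h2 _ _ _ h0 h4 h2' with h | h | h
        · exact hne (by decide) h
        · exact hne (by decide) h
        · exact hne (by decide) h
    · rcases cov a12 with h1 | h2'
      · rcases h2 _ _ _ h0 h5 h1 with h | h | h
        · exact hne (by decide) h
        · exact hne (by decide) h
        · exact hne (by decide) h
      · rcases h2 _ _ _ h0 h5 h2' with h | h | h
        · exact hne (by decide) h
        · exact hne (by decide) h
        · exact hne (by decide) h
  · have h1 : P (f 1) := (cov a01).resolve_left h0
    have h3 : P (f 3) := (cov a30).resolve_right h0
    have h4 : P (f 4) := (cov a04).resolve_left h0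
    rcases h2 _ _ _ h1 h3 h4 with h | h | h
    · exact hne (by decide) h
    · exact hne (by decide) h
    · exact hne (by decide) h


/-- book `K₂ ∨ kK₁` on `0..k+1` plus a disjoint edge `{k+2,k+3}`. -/
def Bgraph (k : ℕ) : SimpleGraph (Fin (k+4)) where
  Adj i j := i ≠ j ∧ ((i.val < k+2 ∧ j.val < k+2 ∧ (i.val < 2 ∨ j.val < 2)) ∨
    (k+2 ≤ i.val ∧ k+2 ≤ j.val))
  symm := by
    constructor
    rintro i j ⟨h1, h2⟩
    refine ⟨h1.symm, ?_⟩
    rcases h2 with ⟨a,b,c⟩ | ⟨a,b⟩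
    · exact Or.inl ⟨b, a, c.symm⟩
    · exact Or.inr ⟨b, a⟩
  loopless := by constructor; rintro i ⟨h1, _⟩; exact h1 rfl

instance (k : ℕ) : DecidableRel (Bgraph k).Adj := fun i j =>
  inferInstanceAs (Decidable (_ ∧ _))

lemma card_val_lt (n c : ℕ) (h : c < n) :
    (Finset.univ.filter fun j : Fin n => j.val < c).card = c := by
  have e : (Finset.univ.filter fun j : Fin n => j.val < c) = Finset.Iio ⟨c, h⟩ := by
    ext j; simp [Fin.lt_def]
  rw [e, Fin.card_Iio]

-- neighbor characterizations
lemma nbr0 (k : ℕ) (v : Fin (k+4)) (hv : v.val < 2) :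
    (Bgraph k).neighborFinset v = Finset.univ.filter (fun j => j ≠ v ∧ j.val < k+2) := by
  ext j
  simp only [SimpleGraph.mem_neighborFinset, Finset.mem_filter, Finset.mem_univ, true_and]
  constructor
  · rintro ⟨h1, ⟨a,b,c⟩ | ⟨a,b⟩⟩
    · exact ⟨Ne.symm h1, b⟩
    · omega
  · rintro ⟨h1, h2⟩
    exact ⟨Ne.symm h1, Or.inl ⟨by omega, h2, Or.inl hv⟩⟩

lemma nbrMid (k : ℕ) (v : Fin (k+4)) (hv : 2 ≤ v.val) (hv2 : v.val < k+2) :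
    (Bgraph k).neighborFinset v = Finset.univ.filter (fun j => j.val < 2) := by
  ext j
  simp only [SimpleGraph.mem_neighborFinset, Finset.mem_filter, Finset.mem_univ, true_and]
  constructor
  · rintro ⟨h1, ⟨a,b,c⟩ | ⟨a,b⟩⟩ <;> omega
  · intro h1
    refine ⟨fun h => by omega, Or.inl ⟨hv2, by omega, Or.inr h1⟩⟩
lemma nbrTail (k : ℕ) (v : Fin (k+4)) (hv : k+2 ≤ v.val) :
    (Bgraph k).neighborFinset v = Finset.univ.filter (fun j => j ≠ v ∧ k+2 ≤ j.val) := by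
  ext j
  simp only [SimpleGraph.mem_neighborFinset, Finset.mem_filter, Finset.mem_univ, true_and]
  constructor
  · rintro ⟨h1, ⟨a,b,c⟩ | ⟨a,b⟩⟩
    · omega
    · exact ⟨Ne.symm h1, b⟩
  · rintro ⟨h1, h2⟩
    exact ⟨Ne.symm h1, Or.inr ⟨hv, h2⟩⟩

lemma tail_card (k : ℕ) (v : Fin (k+4)) (hv : k+2 ≤ v.val) :
    (Finset.univ.filter (fun j : Fin (k+4) => j ≠ v ∧ k+2 ≤ j.val)).card = 1 := by
  rw [Finset.card_eq_one]
  have hv4 := v.isLt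
  refine ⟨if v.val = k+2 then ⟨k+3, by omega⟩ else ⟨k+2, by omega⟩, ?_⟩
  ext j
  have hj := j.isLt
  simp only [Finset.mem_filter, Finset.mem_univ, true_and, Finset.mem_singleton]
  constructor
  · rintro ⟨h1, h2⟩
    have : j.val ≠ v.val := fun h => h1 (Fin.ext h)
    split <;> (apply Fin.ext; simp; omega)
  · intro h
    subst h
    split
    · refine ⟨fun h => ?_, by simp⟩
      have := congrArg Fin.val h; simp_all
    · refine ⟨fun h => ?_, by simp⟩
      have := congrArg Fin.val h; simp at this; omega

lemma nbr0_card (k : ℕ) (v : Fin (k+4)) (hv : v.val < 2) :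
    (Finset.univ.filter (fun j : Fin (k+4) => j ≠ v ∧ j.val < k+2)).card = k+1 := by
  have e : (Finset.univ.filter (fun j : Fin (k+4) => j ≠ v ∧ j.val < k+2))
      = (Finset.univ.filter (fun j : Fin (k+4) => j.val < k+2)).erase v := by
    ext j
    simp only [Finset.mem_filter, Finset.mem_univ, true_and, Finset.mem_erase]
    try tauto
  rw [e, Finset.card_erase_of_mem (by simp [Finset.mem_filter]; omega),
    card_val_lt (k+4) (k+2) (by omega)]
  omega

lemma Bgraph_degree (k : ℕ) (v : Fin (k+4)) :
    (Bgraph k).degree v = if v.val < 2 then k+1 else if v.val < k+2 then 2 else 1 := by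
  rw [SimpleGraph.degree]
  split
  · rename_i h; rw [nbr0 k v h, nbr0_card k v h]
  · split
    · rename_i h1 h2
      rw [nbrMid k v (by omega) h2, card_val_lt (k+4) 2 (by omega)]
    · rename_i h1 h2
      rw [nbrTail k v (by omega), tail_card k v (by omega)]

lemma Bgraph_edges (k : ℕ) : (Bgraph k).edgeSet.ncard = 2*k+2 := by
  have h1 : (Bgraph k).edgeSet.ncard = (Bgraph k).edgeFinset.card := by
    rw [← SimpleGraph.coe_edgeFinset, Set.ncard_coe_finset]
  have h2 := SimpleGraph.sum_degrees_eq_twice_card_edges (Bgraph k)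
  have h3 : ∑ v : Fin (k+4), (Bgraph k).degree v = 4*k + 4 := by
    calc ∑ v : Fin (k+4), (Bgraph k).degree v
        = ∑ v : Fin (k+4), (if v.val < 2 then k+1 else if v.val < k+2 then 2 else 1) := by
          exact Finset.sum_congr rfl fun v _ => Bgraph_degree k v
      _ = 4*k+4 := by
          rw [← Finset.sum_filter_add_sum_filter_not Finset.univ (fun v : Fin (k+4) => v.val < 2)]
          have e1 : ∀ v ∈ Finset.univ.filter (fun v : Fin (k+4) => v.val < 2),
              (if v.val < 2 then k+1 else if v.val < k+2 then 2 else 1) = k+1 := by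
            intro v hv; simp at hv; simp [hv]
          rw [Finset.sum_congr rfl e1, Finset.sum_const, card_val_lt (k+4) 2 (by omega)]
          rw [← Finset.sum_filter_add_sum_filter_not _ (fun v : Fin (k+4) => v.val < k+2)]
          have e2 : ∀ v ∈ (Finset.univ.filter (fun v : Fin (k+4) => ¬ v.val < 2)).filter
              (fun v : Fin (k+4) => v.val < k+2),
              (if v.val < 2 then k+1 else if v.val < k+2 then 2 else 1) = 2 := by
            intro v hv; simp at hv; simp [hv.1, hv.2]
          have e3 : ∀ v ∈ (Finset.univ.filter (fun v : Fin (k+4) => ¬ v.val < 2)).filter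
              (fun v : Fin (k+4) => ¬ v.val < k+2),
              (if v.val < 2 then k+1 else if v.val < k+2 then 2 else 1) = 1 := by
            intro v hv; simp at hv
            rw [if_neg (by omega), if_neg (by omega)]
          rw [Finset.sum_congr rfl e2, Finset.sum_congr rfl e3, Finset.sum_const, Finset.sum_const]
          have c2 : ((Finset.univ.filter (fun v : Fin (k+4) => ¬ v.val < 2)).filter
              (fun v : Fin (k+4) => v.val < k+2)).card = k := by
            have e : (Finset.univ.filter (fun v : Fin (k+4) => ¬ v.val < 2)).filter
                (fun v : Fin (k+4) => v.val < k+2)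
                = (Finset.univ.filter (fun v : Fin (k+4) => v.val < k+2)) \
                  (Finset.univ.filter (fun v : Fin (k+4) => v.val < 2)) := by
              ext j; simp; omega
            rw [e, Finset.card_sdiff_of_subset (by intro j; simp; omega),
              card_val_lt (k+4) (k+2) (by omega), card_val_lt (k+4) 2 (by omega)]
            omega
          have c3 : ((Finset.univ.filter (fun v : Fin (k+4) => ¬ v.val < 2)).filter
              (fun v : Fin (k+4) => ¬ v.val < k+2)).card = 2 := by
            have e : (Finset.univ.filter (fun v : Fin (k+4) => ¬ v.val < 2)).filter
                (fun v : Fin (k+4) => ¬ v.val < k+2)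
                = Finset.univ \ (Finset.univ.filter (fun v : Fin (k+4) => v.val < k+2)) := by
              ext j; simp; omega
            rw [e, Finset.card_sdiff_of_subset (Finset.filter_subset _ _),
              card_val_lt (k+4) (k+2) (by omega)]
            simp
            try omega
          rw [c2, c3]
          simp [smul_eq_mul]
          try ring
          try omega
  omega

lemma Bgraph_adj (k : ℕ) (i j : Fin (k+4)) : (Bgraph k).Adj i j ↔
    (i ≠ j ∧ ((i.val < k+2 ∧ j.val < k+2 ∧ (i.val < 2 ∨ j.val < 2)) ∨
      (k+2 ≤ i.val ∧ k+2 ≤ j.val))) := Iff.rfl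

lemma Bgraph_noiso (k : ℕ) : ∀ v : Fin (k+4), ∃ w, (Bgraph k).Adj v w := by
  intro v
  have hv := v.isLt
  by_cases h : v.val < k+2
  · by_cases h0 : v.val = 0
    · exact ⟨⟨1, by omega⟩, by rw [Bgraph_adj]; simp only [ne_eq, Fin.ext_iff]; simp; omega⟩
    · exact ⟨⟨0, by omega⟩, by rw [Bgraph_adj]; exact ⟨fun h => h0 (congrArg Fin.val h), Or.inl ⟨h, show 0 < k+2 by omega, Or.inr (show 0 < 2 by omega)⟩⟩⟩
  · by_cases h0 : v.val = k+2
    · exact ⟨⟨k+3, by omega⟩, by rw [Bgraph_adj]; simp only [ne_eq, Fin.ext_iff]; simp; omega⟩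
    · exact ⟨⟨k+2, by omega⟩, by rw [Bgraph_adj]; simp only [ne_eq, Fin.ext_iff]; simp; omega⟩

noncomputable def lam (k : ℕ) : ℝ := (1 + Real.sqrt (8*k+1))/2

lemma lam_sq (k : ℕ) : lam k * lam k = lam k + 2*k := by
  have h : Real.sqrt (8*k+1) ^ 2 = 8*k+1 := Real.sq_sqrt (by positivity)
  unfold lam
  nlinarith [h]

lemma lam_pos (k : ℕ) : 0 < lam k := by
  have := Real.sqrt_nonneg (8*(k:ℝ)+1)
  unfold lam; linarith

noncomputable def xvec (k : ℕ) : Fin (k+4) → ℝ :=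
  fun j => if j.val < 2 then lam k else if j.val < k+2 then 2 else 0

lemma mulVec_eq_nbr_sum {V : Type*} [Fintype V] [DecidableEq V] (G : SimpleGraph V)
    [DecidableRel G.Adj] (x : V → ℝ) (v : V) :
    (adjMat G).mulVec x v = ∑ j ∈ G.neighborFinset v, x j := by
  rw [SimpleGraph.neighborFinset_eq_filter, Finset.sum_filter]
  simp [adjMat, Matrix.mulVec, dotProduct, ite_mul]

lemma Bgraph_eig (k : ℕ) : (adjMat (Bgraph k)).mulVec (xvec k) = lam k • (xvec k) := by
  funext v
  rw [mulVec_eq_nbr_sum]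
  have hv4 := v.isLt
  simp only [Pi.smul_apply, smul_eq_mul]
  by_cases h2 : v.val < 2
  · rw [nbr0 k v h2]
    rw [← Finset.sum_filter_add_sum_filter_not _ (fun j : Fin (k+4) => j.val < 2)]
    have e1 : (Finset.univ.filter (fun j : Fin (k+4) => j ≠ v ∧ j.val < k+2)).filter
        (fun j => j.val < 2) = (Finset.univ.filter (fun j : Fin (k+4) => j.val < 2)).erase v := by
      ext j; simp; omega
    have e2 : ∑ j ∈ (Finset.univ.filter (fun j : Fin (k+4) => j ≠ v ∧ j.val < k+2)).filter
        (fun j => j.val < 2), xvec k j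
        = lam k := by
      rw [e1]
      rw [Finset.sum_congr rfl (fun j hj => by
        simp only [Finset.mem_erase, Finset.mem_filter] at hj
        show xvec k j = lam k
        simp [xvec, hj.2.2])]
      rw [Finset.sum_const, Finset.card_erase_of_mem (by simp; omega),
        card_val_lt (k+4) 2 (by omega)]
      simp
    have e3 : ∑ j ∈ (Finset.univ.filter (fun j : Fin (k+4) => j ≠ v ∧ j.val < k+2)).filter
        (fun j => ¬ j.val < 2), xvec k j = 2*k := by
      have ec : (Finset.univ.filter (fun j : Fin (k+4) => j ≠ v ∧ j.val < k+2)).filter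
          (fun j => ¬ j.val < 2)
          = (Finset.univ.filter (fun j : Fin (k+4) => j.val < k+2)) \
            (Finset.univ.filter (fun j : Fin (k+4) => j.val < 2)) := by
        ext j; simp only [Finset.mem_filter, Finset.mem_univ, true_and, Finset.mem_sdiff,
          ne_eq, Fin.ext_iff]
        omega
      rw [Finset.sum_congr rfl (fun j hj => by
        simp only [Finset.mem_filter, Finset.mem_univ, true_and] at hj
        show xvec k j = 2
        simp [xvec, hj.1.2, hj.2])]
      rw [Finset.sum_const, ec, Finset.card_sdiff_of_subset (by intro j; simp; omega),
        card_val_lt (k+4) (k+2) (by omega), card_val_lt (k+4) 2 (by omega)]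
      simp; ring
    rw [e2, e3]
    have : xvec k v = lam k := by simp [xvec, h2]
    rw [this]
    have := lam_sq k
    linarith
  · by_cases hm : v.val < k+2
    · rw [nbrMid k v (by omega) hm]
      rw [Finset.sum_congr rfl (fun j hj => by
        simp only [Finset.mem_filter, Finset.mem_univ, true_and] at hj
        show xvec k j = lam k
        simp [xvec, hj])]
      rw [Finset.sum_const, card_val_lt (k+4) 2 (by omega)]
      have : xvec k v = 2 := by simp [xvec, h2, hm]
      rw [this]
      simp; ring
    · rw [nbrTail k v (by omega)]
      rw [Finset.sum_eq_zero (fun j hj => by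
        simp only [Finset.mem_filter, Finset.mem_univ, true_and] at hj
        obtain ⟨hj1, hj2⟩ := hj
        show xvec k j = 0
        have := j.isLt
        rw [xvec, if_neg (by omega), if_neg (by omega)])]
      have hx0 : xvec k v = 0 := by
        rw [xvec, if_neg (by omega), if_neg (by omega)]
      rw [hx0]; ring

lemma specSet_bdd {V : Type*} [Fintype V] (G : SimpleGraph V) :
    BddAbove {t : ℝ | ∃ x : V → ℝ, x ≠ 0 ∧ (adjMat G).mulVec x = t • x} := by
  classical
  refine ⟨(Fintype.card V : ℝ), ?_⟩
  rintro t ⟨x, hx, he⟩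
  have hne : Nonempty V := by
    by_contra h
    exact hx (funext fun v => absurd ⟨v⟩ h)
  obtain ⟨v, -, hv⟩ := Finset.exists_max_image Finset.univ (fun v => |x v|) Finset.univ_nonempty
  have hvpos : 0 < |x v| := by
    rcases (abs_nonneg (x v)).lt_or_eq with h | h
    · exact h
    · exfalso; apply hx
      funext w
      have := hv w (Finset.mem_univ w)
      rw [← h] at this
      simpa using abs_nonpos_iff.mp this
  have heq := congrFun he v
  simp only [Pi.smul_apply, smul_eq_mul] at heq
  have habs : |t| * |x v| ≤ (Fintype.card V : ℝ) * |x v| := by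
    rw [← abs_mul, ← heq]
    calc |(adjMat G).mulVec x v| ≤ ∑ j, |adjMat G v j * x j| := by
          rw [Matrix.mulVec, dotProduct]
          exact Finset.abs_sum_le_sum_abs _ _
      _ ≤ ∑ _j : V, |x v| := by
          apply Finset.sum_le_sum
          intro j _
          rw [abs_mul]
          have h1 : |adjMat G v j| ≤ 1 := by
            simp only [adjMat]
            split <;> simp
          calc |adjMat G v j| * |x j| ≤ 1 * |x v| :=
                mul_le_mul h1 (hv j (Finset.mem_univ j)) (abs_nonneg _) zero_le_one
            _ = |x v| := one_mul _
      _ = (Fintype.card V : ℝ) * |x v| := by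
          rw [Finset.sum_const, Finset.card_univ, nsmul_eq_mul]
  have : |t| ≤ (Fintype.card V : ℝ) := le_of_mul_le_mul_right habs hvpos
  exact le_trans (le_abs_self t) this

lemma Bgraph_free (k : ℕ) : H43Free (Bgraph k) := by
  apply h43free_aux (Bgraph k) (fun v => v.val < 2) (fun v => v.val < k+2)
  · intro a b hab ha hb
    rw [Bgraph_adj] at hab
    rcases hab.2 with ⟨_, _, h⟩ | ⟨h1, h2⟩
    · exact h
    · omega
  · intro v w w' hne hvw hvw'
    by_contra hcon
    rw [Bgraph_adj] at hvw hvw'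
    have hw : k+2 ≤ w.val := by
      rcases hvw.2 with ⟨a, _, _⟩ | ⟨_, b⟩ <;> omega
    have hw' : k+2 ≤ w'.val := by
      rcases hvw'.2 with ⟨a, _, _⟩ | ⟨_, b⟩ <;> omega
    have h1 : w.val ≠ w'.val := fun h => hne (Fin.ext h)
    have h2 : v.val ≠ w.val := fun h => hvw.1 (Fin.ext h)
    have h3 : v.val ≠ w'.val := fun h => hvw'.1 (Fin.ext h)
    have := v.isLt; have := w.isLt; have := w'.isLt
    omega
  · intro a b c ha hb hc
    simp only [Fin.ext_iff]
    have := a.isLt; have := b.isLt; have := c.isLt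
    omega


/-- For an extremal graph `G` (even `m ≥ 38`) with Perron vector `x`
maximized at `u`, the subgraph induced by `N(u)` contains an edge. -/
theorem stmt10 {V : Type*} [Fintype V] (m : ℕ) (hm : 38 ≤ m) (hme : Even m)
    (G : SimpleGraph V) (hext : IsExtremal m G)
    (x : V → ℝ) (hxpos : ∀ v, 0 < x v)
    (heig : (adjMat G).mulVec x = specRad G • x)
    (u : V) (hmaxx : ∀ v, x v ≤ x u) :
    ∃ a ∈ G.neighborSet u, ∃ b ∈ G.neighborSet u, G.Adj a b := by
  classical
  by_contra hcon
  push_neg at hcon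
  set ρ := specRad G with hρdef
  -- choose k with m = 2k+2
  obtain ⟨t, ht⟩ := hme
  have ht19 : 19 ≤ t := by omega
  have hmk : m = 2*(t-1)+2 := by omega
  set k := t - 1 with hkdef
  have hk : 18 ≤ k := by omega
  -- Step A : sqrt m < ρ
  have hBedges : (Bgraph k).edgeSet.ncard = m := by rw [Bgraph_edges]; omega
  have hBle : specRad (Bgraph k) ≤ ρ :=
    hext.2.2.2 (k+4) (Bgraph k) (Bgraph_free k) hBedges (Bgraph_noiso k)
  have hxne : xvec k ≠ 0 := by
    intro h
    have h0 : xvec k ⟨0, by omega⟩ = 0 := by rw [h]; rfl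
    rw [xvec] at h0
    simp at h0
    exact (lam_pos k).ne' h0
  have hlam_le : lam k ≤ specRad (Bgraph k) :=
    le_csSup (specSet_bdd _) ⟨xvec k, hxne, Bgraph_eig k⟩
  have hlam2 : 2 < lam k := by
    have h3 : (3:ℝ) < Real.sqrt (8*k+1) := by
      rw [show (3:ℝ) = Real.sqrt 9 by
        rw [show (9:ℝ) = 3^2 by norm_num, Real.sqrt_sq (by norm_num)]]
      apply Real.sqrt_lt_sqrt (by norm_num)
      have : (18:ℝ) ≤ k := by exact_mod_cast hk
      linarith
    rw [lam]; linarith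
  have hsqrt : Real.sqrt m < lam k := by
    rw [show ((m:ℝ)) = 2*k+2 by rw [hmk]; push_cast; ring]
    have hsq : 2*(k:ℝ)+2 < lam k * lam k := by
      have := lam_sq k
      linarith
    nlinarith [Real.sq_sqrt (show (0:ℝ) ≤ 2*k+2 by positivity),
      Real.sqrt_nonneg (2*(k:ℝ)+2), lam_pos k]
  have hρ_gt : Real.sqrt m < ρ := lt_of_lt_of_le hsqrt (le_trans hlam_le hBle)
  -- Step B : ρ * ρ ≤ m
  have hedgecard : G.edgeFinset.card = m := by
    rw [← hext.2.1, ← SimpleGraph.coe_edgeFinset, Set.ncard_coe_finset]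
  have hdegsum : ∑ v ∈ G.neighborFinset u, (G.neighborFinset v).card ≤ m := by
    rw [← Finset.card_sigma, ← hedgecard]
    apply Finset.card_le_card_of_injOn (fun p => s(p.1, p.2))
    · intro p hp
      simp only [Finset.mem_coe] at hp ⊢
      rw [Finset.mem_sigma] at hp
      rw [SimpleGraph.mem_edgeFinset, SimpleGraph.mem_edgeSet]
      exact (SimpleGraph.mem_neighborFinset _ _ _).mp hp.2
    · intro p hp q hq hpq
      simp only [Finset.mem_coe, Finset.mem_sigma, SimpleGraph.mem_neighborFinset] at hp hq
      simp only [Sym2.eq_iff] at hpq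
      rcases hpq with ⟨h1, h2⟩ | ⟨h1, h2⟩
      · exact Sigma.ext h1 (heq_of_eq h2)
      · exfalso
        refine hcon p.1 ((SimpleGraph.mem_neighborSet _ _ _).mpr hp.1) p.2 ?_ hp.2
        rw [SimpleGraph.mem_neighborSet, h2]
        exact hq.1
  have hmv2 : (adjMat G).mulVec ((adjMat G).mulVec x) = ρ • (ρ • x) := by
    rw [heig, Matrix.mulVec_smul, heig]
  have hLHS : ρ * (ρ * x u) = ∑ v ∈ G.neighborFinset u, ∑ w ∈ G.neighborFinset v, x w := by
    have h1 := congrFun hmv2 u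
    simp only [Pi.smul_apply, smul_eq_mul] at h1
    rw [← h1, mulVec_eq_nbr_sum]
    exact Finset.sum_congr rfl fun v _ => mulVec_eq_nbr_sum G x v
  have hbound : ρ * (ρ * x u) ≤ (m:ℝ) * x u := by
    rw [hLHS]
    calc ∑ v ∈ G.neighborFinset u, ∑ w ∈ G.neighborFinset v, x w
        ≤ ∑ v ∈ G.neighborFinset u, ((G.neighborFinset v).card : ℝ) * x u := by
          apply Finset.sum_le_sum
          intro v _
          calc ∑ w ∈ G.neighborFinset v, x w ≤ ∑ _w ∈ G.neighborFinset v, x u :=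
                Finset.sum_le_sum fun w _ => hmaxx w
            _ = ((G.neighborFinset v).card : ℝ) * x u := by
                rw [Finset.sum_const, nsmul_eq_mul]
      _ = ((∑ v ∈ G.neighborFinset u, (G.neighborFinset v).card : ℕ) : ℝ) * x u := by
          rw [Nat.cast_sum, Finset.sum_mul]
      _ ≤ (m:ℝ) * x u := by
          apply mul_le_mul_of_nonneg_right _ (hxpos u).le
          exact_mod_cast hdegsum
  have hle : ρ * ρ ≤ (m:ℝ) := by
    have := hxpos u
    have h2 : (ρ * ρ) * x u ≤ (m:ℝ) * x u := by rw [mul_assoc]; exact hbound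
    exact le_of_mul_le_mul_right h2 this
  have hgt : (m:ℝ) < ρ * ρ := by
    have hs : Real.sqrt m * Real.sqrt m = (m:ℝ) := Real.mul_self_sqrt (by positivity)
    nlinarith [Real.sqrt_nonneg (m:ℝ)]
  linarith
end

section
/- Let H be a connected finite simple graph containing no subgraph isomorphic to P₂ ∪ P₃ (the disjoint union of an edge and a path on 3 vertices). Then either H is a star K_{1,t} for some t ≥ 0 (including the single vertex K₁), or H has at most 4 vertices. -/
open SimpleGraph Matrix

/-- If a walk starts in `S` and ends outside `S`, some edge crosses the cut. -/
lemma crossing_lemma {V : Type*} {H : SimpleGraph V} {u t : V} (p : H.Walk u t) :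
    ∀ S : Set V, u ∈ S → t ∉ S → ∃ x ∈ S, ∃ y, y ∉ S ∧ H.Adj x y := by
  induction p with
  | nil => intro S hu ht; exact absurd hu ht
  | @cons u m t h p ih =>
    intro S hu ht
    by_cases hm : m ∈ S
    · exact ih S hm ht
    · exact ⟨u, hu, m, hm, h⟩

/-- A connected graph with no `P₂ ∪ P₃` subgraph is a star `K_{1,t}`
(for some `t ≥ 0`, including `K₁`) or has at most `4` vertices. -/
theorem stmt13 {V : Type*} [Fintype V] (H : SimpleGraph V) (hconn : H.Connected)
    (hfree : ¬ ∃ a b c d e : V, a ≠ b ∧ a ≠ c ∧ a ≠ d ∧ a ≠ e ∧ b ≠ c ∧ b ≠ d ∧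
      b ≠ e ∧ c ≠ d ∧ c ≠ e ∧ d ≠ e ∧ H.Adj a b ∧ H.Adj c d ∧ H.Adj d e) :
    (∃ t : ℕ, Nonempty (H ≃g starG t)) ∨ Fintype.card V ≤ 4 := by
  classical
  by_cases h4 : Fintype.card V ≤ 4
  · exact Or.inr h4
  push_neg at h4
  push_neg at hfree
  -- every vertex distinct from some other vertex has a neighbor
  have hnb : ∀ v w : V, v ≠ w → ∃ z, H.Adj v z := by
    intro v w hvw
    obtain ⟨p⟩ := hconn.preconnected v w
    cases p with
    | nil => exact absurd rfl hvw
    | cons h _ => exact ⟨_, h⟩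
  -- the forbidden-pattern lemma in disjunction form
  have hA : ∀ a b c d e : V, H.Adj a b → H.Adj c d → H.Adj d e →
      a = b ∨ a = c ∨ a = d ∨ a = e ∨ b = c ∨ b = d ∨ b = e ∨ c = d ∨ c = e ∨ d = e := by
    intro a b c d e h1 h2 h3
    by_contra hcon
    push_neg at hcon
    obtain ⟨n1, n2, n3, n4, n5, n6, n7, n8, n9, n10⟩ := hcon
    exact hfree a b c d e n1 n2 n3 n4 n5 n6 n7 n8 n9 n10 h1 h2 h3
  -- a fifth vertex always exists
  have hfifth : ∀ a b c d : V, ∃ v, v ≠ a ∧ v ≠ b ∧ v ≠ c ∧ v ≠ d := by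
    intro a b c d
    by_contra hcon
    push_neg at hcon
    have hsub : (Finset.univ : Finset V) ⊆ {a, b, c, d} := by
      intro v _
      simp only [Finset.mem_insert, Finset.mem_singleton]
      by_cases h1 : v = a; · exact Or.inl h1
      by_cases h2 : v = b; · exact Or.inr (Or.inl h2)
      by_cases h3 : v = c; · exact Or.inr (Or.inr (Or.inl h3))
      exact Or.inr (Or.inr (Or.inr (hcon v h1 h2 h3)))
    have hle := Finset.card_le_card hsub
    rw [Finset.card_univ] at hle
    have h1 := Finset.card_insert_le a ({b, c, d} : Finset V)
    have h2 := Finset.card_insert_le b ({c, d} : Finset V)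
    have h3 := Finset.card_insert_le c ({d} : Finset V)
    simp only [Finset.card_singleton] at h3
    omega
  -- no two disjoint edges
  have hB : ∀ a b c d : V, H.Adj a b → H.Adj c d → a = c ∨ a = d ∨ b = c ∨ b = d := by
    intro a b c d hab hcd
    by_contra hcon
    push_neg at hcon
    obtain ⟨nac, nad, nbc, nbd⟩ := hcon
    have hne1 := hab.ne
    have hne2 := hcd.ne
    obtain ⟨v, hva, hvb, hvc, hvd⟩ := hfifth a b c d
    obtain ⟨w, hvw⟩ := hnb v a hva
    have hne3 := hvw.ne
    by_cases hw1 : w = a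
    · have hwb : H.Adj w b := by rw [hw1]; exact hab
      rcases hA c d v w b hcd hvw hwb with h | h | h | h | h | h | h | h | h | h <;> subst_vars <;>
        exact absurd rfl (by assumption)
    by_cases hw2 : w = b
    · have hwa : H.Adj w a := by rw [hw2]; exact hab.symm
      rcases hA c d v w a hcd hvw hwa with h | h | h | h | h | h | h | h | h | h <;> subst_vars <;>
        exact absurd rfl (by assumption)
    by_cases hw3 : w = c
    · have hwd : H.Adj w d := by rw [hw3]; exact hcd
      rcases hA a b v w d hab hvw hwd with h | h | h | h | h | h | h | h | h | h <;> subst_vars <;>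
        exact absurd rfl (by assumption)
    by_cases hw4 : w = d
    · have hwc : H.Adj w c := by rw [hw4]; exact hcd.symm
      rcases hA a b v w c hab hvw hwc with h | h | h | h | h | h | h | h | h | h <;> subst_vars <;>
        exact absurd rfl (by assumption)
    -- the neighbor w is outside {a,b,c,d}; cross the cut around {a,b}
    obtain ⟨p⟩ := hconn.preconnected a c
    obtain ⟨x, hxS, y, hyS, hxy⟩ := crossing_lemma p {a, b} (by simp)
      (by rintro (h | h); exacts [nac h.symm, nbc h.symm])
    simp only [Set.mem_insert_iff, Set.mem_singleton_iff] at hxS hyS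
    push_neg at hyS
    obtain ⟨hya, hyb⟩ := hyS
    have hne4 := hxy.ne
    rcases hxS with rfl | rfl
    · by_cases hyc : y = c
      · rcases hA v w b x y hvw hab.symm hxy with h | h | h | h | h | h | h | h | h | h <;> subst_vars <;>
          exact absurd rfl (by assumption)
      by_cases hyd : y = d
      · rcases hA v w b x y hvw hab.symm hxy with h | h | h | h | h | h | h | h | h | h <;> subst_vars <;>
          exact absurd rfl (by assumption)
      rcases hA c d b x y hcd hab.symm hxy with h | h | h | h | h | h | h | h | h | h <;> subst_vars <;>
        exact absurd rfl (by assumption)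
    · by_cases hyc : y = c
      · rcases hA v w a x y hvw hab hxy with h | h | h | h | h | h | h | h | h | h <;> subst_vars <;>
          exact absurd rfl (by assumption)
      by_cases hyd : y = d
      · rcases hA v w a x y hvw hab hxy with h | h | h | h | h | h | h | h | h | h <;> subst_vars <;>
          exact absurd rfl (by assumption)
      rcases hA c d a x y hcd hab hxy with h | h | h | h | h | h | h | h | h | h <;> subst_vars <;>
        exact absurd rfl (by assumption)
  -- pick an edge
  have hNV : Nonempty V := Fintype.card_pos_iff.mp (by omega)
  obtain ⟨a1⟩ := hNV
  obtain ⟨a0, ha0, -, -, -⟩ := hfifth a1 a1 a1 a1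
  obtain ⟨b0, hab0⟩ := hnb a0 a1 ha0
  -- there is a vertex covering all edges
  have hctr : ∃ x : V, ∀ v w : V, H.Adj v w → v = x ∨ w = x := by
    by_contra hcon
    push_neg at hcon
    obtain ⟨v, w, hvw, hva, hwa⟩ := hcon a0
    obtain ⟨c, hbc, hca⟩ : ∃ c, H.Adj b0 c ∧ c ≠ a0 := by
      rcases hB v w a0 b0 hvw hab0 with h | h | h | h
      · exact absurd h hva
      · exact ⟨w, h ▸ hvw, hwa⟩
      · exact absurd h hwa
      · exact ⟨v, h ▸ hvw.symm, hva⟩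
    obtain ⟨v', w', hvw', hvb', hwb'⟩ := hcon b0
    have hac : H.Adj a0 c := by
      rcases hB v' w' a0 b0 hvw' hab0 with h | h | h | h
      · -- v' = a0
        rcases hB v' w' b0 c hvw' hbc with g | g | g | g
        · exact absurd g hvb'
        · exact absurd (g ▸ h : c = a0).symm (Ne.symm hca)
        · exact absurd g hwb'
        · exact g ▸ h ▸ hvw'
      · exact absurd h hvb'
      · -- w' = a0
        rcases hB v' w' b0 c hvw' hbc with g | g | g | g
        · exact absurd g hvb'
        · exact (g ▸ h ▸ hvw' : H.Adj c a0).symm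
        · exact absurd g hwb'
        · exact absurd (h.symm.trans g) hca.symm
      · exact absurd h hwb'
    -- triangle a0 b0 c plus a fifth vertex → contradiction
    have hne1 := hab0.ne
    have hne2 := hbc.ne
    have hne3 := hac.ne
    obtain ⟨d, hd1, hd2, hd3, -⟩ := hfifth a0 b0 c c
    obtain ⟨z, hdz⟩ := hnb d a0 hd1
    have hne4 := hdz.ne
    rcases hB d z a0 b0 hdz hab0 with h | h | h | h <;>
      rcases hB d z b0 c hdz hbc with g | g | g | g <;>
        rcases hB d z a0 c hdz hac with k | k | k | k <;> subst_vars <;>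
          exact absurd rfl (by assumption)
  obtain ⟨x, hx⟩ := hctr
  have hstar : ∀ v, v ≠ x → H.Adj x v := by
    intro v hv
    obtain ⟨z, hvz⟩ := hnb v x hv
    rcases hx v z hvz with h | h
    · exact absurd h hv
    · exact (h ▸ hvz : H.Adj v x).symm
  left
  refine ⟨Fintype.card V - 1, ⟨?_⟩⟩
  have hpos : 0 < Fintype.card V := by omega
  have hcard : Fintype.card V - 1 + 1 = Fintype.card V := by omega
  let e : V ≃ Fin (Fintype.card V - 1 + 1) :=
    ((Fintype.equivFin V).trans (Equiv.swap ((Fintype.equivFin V) x) ⟨0, hpos⟩)).trans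
      (finCongr hcard.symm)
  have hex : (e x).val = 0 := by
    show ((finCongr hcard.symm) ((Equiv.swap ((Fintype.equivFin V) x) ⟨0, hpos⟩)
      ((Fintype.equivFin V) x))).val = 0
    rw [Equiv.swap_apply_left]
    rfl
  have hval : ∀ v, (e v).val = 0 ↔ v = x := by
    intro v
    constructor
    · intro h
      have hev : e v = e x := Fin.ext (by rw [hex, h])
      exact e.injective hev
    · rintro rfl; exact hex
  refine ⟨e, ?_⟩
  intro v w
  show (e v ≠ e w ∧ ((e v).val = 0 ∨ (e w).val = 0)) ↔ H.Adj v w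
  constructor
  · rintro ⟨hne, h0⟩
    have hvw : v ≠ w := fun h => hne (by rw [h])
    rcases h0 with h0 | h0
    · have hvx : v = x := (hval v).mp h0
      subst hvx
      exact hstar w (Ne.symm hvw)
    · have hwx : w = x := (hval w).mp h0
      subst hwx
      exact (hstar v hvw).symm
  · intro hvw
    refine ⟨fun h => hvw.ne (e.injective h), ?_⟩
    rcases hx v w hvw with h | h
    · exact Or.inl ((hval v).mpr h)
    · exact Or.inr ((hval w).mpr h)
end

section
/- For every even integer m ≥ 4, the graph S⁻_{(m+4)/2,2} contains no subgraph isomorphic to H(4,3). -/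
open SimpleGraph Matrix

/-- For every even `m ≥ 4`, the graph `S⁻_{(m+4)/2,2}` contains no
subgraph isomorphic to `H(4,3)`. -/
theorem stmt17 (m : ℕ) (hm : 4 ≤ m) (hme : Even m) :
    ¬ ContainsSub H43 (SgraphMinus ((m + 4) / 2)) := by
  rintro ⟨f, hinj, hadj⟩
  have hsm : ∀ (a b : Fin 6), H43.Adj a b → (f a).val < 2 ∨ (f b).val < 2 := by
    intro a b h
    exact (hadj h).2.1
  have hne : ∀ (a b : Fin 6), a ≠ b → (f a).val ≠ (f b).val := by
    intro a b hab h
    exact hab (hinj (Fin.ext h))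
  have C : ∀ i j k : Fin 6, i ≠ j → i ≠ k → j ≠ k →
      (f i).val < 2 → (f j).val < 2 → (f k).val < 2 → False := by
    intro i j k hij hik hjk h1 h2 h3
    have := hne i j hij
    have := hne i k hik
    have := hne j k hjk
    omega
  have e12 : (f 1).val < 2 ∨ (f 2).val < 2 := hsm 1 2 (by simp [H43])
  have e30 : (f 3).val < 2 ∨ (f 0).val < 2 := hsm 3 0 (by simp [H43])
  have e45 : (f 4).val < 2 ∨ (f 5).val < 2 := hsm 4 5 (by simp [H43])
  rcases e12 with h1 | h1 <;> rcases e30 with h2 | h2 <;> rcases e45 with h3 | h3 <;>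
    exact C _ _ _ (by decide) (by decide) (by decide) h1 h2 h3
end
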